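/- arXiv:math/0406195 — 7 statements merged into one kernel-verified Lean document; each statement's English description precedes it below -/
import Mathlib

section
/- Let (R, m_R) and (S, m_S) be local rings and let φ : R → S be a local ring homomorphism such that (i) S is flat as an R-module, and (ii) m_R·S = m_S (the extension of the maximal ideal of R is the maximal ideal of S). Then for every ideal I of R, the length of S/IS as an S-module equals the length of R/I as an R-module. -/
/-!
Auxiliary lemmas for the proof that length is preserved by flat local extensions
with `m_R · S = m_S`.
-/

section Aux

/-- Jordan–Hölder type bound: in a modular lattice, if there is a chain of covers
`y 0 ⋖ y 1 ⋖ ... ⋖ y n`, then any strictly increasing series lying between `y 0`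
and `y n` has length at most `n`. -/
theorem covchain_bound_aux {α : Type*} [Lattice α] [IsModularLattice α] :
    ∀ (n : ℕ) (y : ℕ → α), (∀ i < n, y i ⋖ y (i + 1)) →
      ∀ p : LTSeries α, y 0 ≤ p.head → p.last ≤ y n → p.length ≤ n := by
  intro n
  induction n with
  | zero =>
    intro y _ p h0 hl
    by_contra h
    have hlen : 0 < p.length := Nat.pos_of_ne_zero (by omega)
    have hlt : p.head < p.last :=
      p.strictMono (show (⟨0, by omega⟩ : Fin (p.length + 1)) < ⟨p.length, by omega⟩ from
        Fin.mk_lt_mk.mpr hlen)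
    exact absurd (lt_of_lt_of_le hlt (hl.trans h0)) (lt_irrefl _)
  | succ n IH =>
    intro y hcov p h0 hl
    set c := y n with hc
    have hcb : c ⋖ y (n + 1) := hcov n (by omega)
    have hy0c : y 0 ≤ c := by
      have hmono : ∀ m, m ≤ n → y 0 ≤ y m := by
        intro m
        induction m with
        | zero => intro _; exact le_rfl
        | succ m ihm => intro hm; exact (ihm (by omega)).trans (hcov m (by omega)).le
      exact hmono n le_rfl
    set k := p.length with hk
    by_cases hall : ∀ i : Fin (k + 1), p i ≤ c
    · have := IH y (fun i hi => hcov i (by omega)) p h0 (hall ⟨k, by omega⟩)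
      omega
    · push_neg at hall
      obtain ⟨i0, hi0⟩ := hall
      have hsup : ∀ i : Fin (k + 1), ¬ p i ≤ c → p i ⊔ c = y (n + 1) := by
        intro i hi
        have h1 : p i ⊔ c ≤ y (n + 1) :=
          sup_le ((p.monotone (le_top : i ≤ _)).trans hl) hcb.le
        rcases hcb.wcovBy.eq_or_eq (le_sup_right : c ≤ p i ⊔ c) h1 with h | h
        · exact absurd (sup_eq_right.mp h) hi
        · exact h
      rcases Nat.eq_zero_or_pos k with hk0 | hkpos
      · omega
      have hQ : ∃ j, ∃ h : j < k + 1, ¬ p ⟨j, h⟩ ≤ c := ⟨i0, i0.isLt, by rwa [Fin.eta]⟩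
      classical
      set t := Nat.find hQ with ht
      obtain ⟨htk, hNt⟩ := Nat.find_spec hQ
      have hmin : ∀ j (h : j < k + 1), j < t → p ⟨j, h⟩ ≤ c := by
        intro j h hj
        by_contra hcon
        exact absurd ⟨h, hcon⟩ (Nat.find_min hQ hj)
      have hge : ∀ j (hj : j < k + 1), t ≤ j → p ⟨j, hj⟩ ⊔ c = y (n + 1) := by
        intro j hj htj
        refine hsup _ (fun hle => hNt ?_)
        exact (p.monotone (Fin.mk_le_mk.mpr htj)).trans hle
      set f : Fin (k - 1 + 1) → α := fun j =>
        if (j : ℕ) < t then p ⟨j, by have := j.2; omega⟩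
        else p ⟨(j : ℕ) + 1, by have := j.2; omega⟩ ⊓ c with hf
      have hstep : ∀ j : Fin (k - 1), f j.castSucc < f j.succ := by
        intro j
        have hjlt : (j : ℕ) < k - 1 := j.isLt
        have hcs : ((j.castSucc : Fin (k - 1 + 1)) : ℕ) = (j : ℕ) := rfl
        have hsc : ((j.succ : Fin (k - 1 + 1)) : ℕ) = (j : ℕ) + 1 := rfl
        have hj2 : (j : ℕ) + 2 < k + 1 := by omega
        by_cases h1 : (j : ℕ) + 1 < t
        · simp only [hf, hcs, hsc, if_pos (show (j : ℕ) < t by omega), if_pos h1]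
          exact p.strictMono (Fin.mk_lt_mk.mpr (by omega))
        · by_cases h2 : (j : ℕ) < t
          · simp only [hf, hcs, hsc, if_pos h2, if_neg h1]
            have hle1 : p ⟨(j : ℕ), by omega⟩ ≤ c := hmin _ _ h2
            have hle2 : p ⟨(j : ℕ), by omega⟩ ≤ p ⟨(j : ℕ) + 2, hj2⟩ :=
              p.monotone (Fin.mk_le_mk.mpr (by omega))
            refine lt_of_le_of_ne (le_inf hle2 hle1) (fun heq => ?_)
            have hmid : p ⟨(j : ℕ) + 1, by omega⟩ ⊓ c = p ⟨(j : ℕ) + 2, hj2⟩ ⊓ c := by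
              refine le_antisymm
                (inf_le_inf_right c (p.monotone (Fin.mk_le_mk.mpr (by omega)))) ?_
              calc p ⟨(j : ℕ) + 2, hj2⟩ ⊓ c = p ⟨(j : ℕ), by omega⟩ := heq.symm
                _ ≤ p ⟨(j : ℕ) + 1, by omega⟩ ⊓ c :=
                    le_inf (p.monotone (Fin.mk_le_mk.mpr (by omega))) hle1
            have hsup1 : p ⟨(j : ℕ) + 1, by omega⟩ ⊔ c = p ⟨(j : ℕ) + 2, hj2⟩ ⊔ c := by
              rw [hge _ _ (by omega), hge _ _ (by omega)]
            have heq2 := eq_of_le_of_inf_le_of_sup_le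
              (p.monotone (Fin.mk_le_mk.mpr (by omega : (j : ℕ) + 1 ≤ (j : ℕ) + 2)))
              (le_of_eq hmid.symm) (le_of_eq hsup1.symm)
            exact absurd heq2 (ne_of_lt (p.strictMono (Fin.mk_lt_mk.mpr (by omega))))
          · simp only [hf, hcs, hsc, if_neg h2, if_neg h1]
            have hlt : p ⟨(j : ℕ) + 1, by omega⟩ < p ⟨(j : ℕ) + 2, hj2⟩ :=
              p.strictMono (Fin.mk_lt_mk.mpr (by omega))
            refine lt_of_le_of_ne (inf_le_inf_right c hlt.le) (fun heq => ?_)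
            have hsup1 : p ⟨(j : ℕ) + 1, by omega⟩ ⊔ c = p ⟨(j : ℕ) + 2, hj2⟩ ⊔ c := by
              rw [hge _ _ (by omega), hge _ _ (by omega)]
            have heq2 := eq_of_le_of_inf_le_of_sup_le hlt.le
              (le_of_eq heq.symm) (le_of_eq hsup1.symm)
            exact absurd heq2 (ne_of_lt hlt)
      set q : LTSeries α := ⟨k - 1, f, hstep⟩ with hq
      have hqhead : y 0 ≤ q.head := by
        show y 0 ≤ f 0
        have hz : ((0 : Fin (k - 1 + 1)) : ℕ) = 0 := rfl
        by_cases h0t : 0 < t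
        · have he : f 0 = p ⟨0, by omega⟩ := by
            rw [hf]; simp only [hz, if_pos h0t]
          rw [he]; exact h0
        · have he : f 0 = p ⟨1, by omega⟩ ⊓ c := by
            rw [hf]; simp only [hz, if_neg (by omega : ¬ (0:ℕ) < t)]
          rw [he]
          exact le_inf (h0.trans (p.monotone
            (show (0 : Fin (k + 1)) ≤ ⟨1, by omega⟩ by rw [Fin.le_def]; simp))) hy0c
      have hqlast : q.last ≤ c := by
        show f (Fin.last (k - 1)) ≤ c
        have hlv : ((Fin.last (k - 1) : Fin (k - 1 + 1)) : ℕ) = k - 1 := rfl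
        by_cases hlt : k - 1 < t
        · have he : f (Fin.last (k - 1)) = p ⟨k - 1, by omega⟩ := by
            rw [hf]; simp only [hlv, if_pos hlt]
          rw [he]; exact hmin _ _ hlt
        · have he : f (Fin.last (k - 1)) = p ⟨k - 1 + 1, by omega⟩ ⊓ c := by
            rw [hf]; simp only [hlv, if_neg hlt]
          rw [he]; exact inf_le_right
      have hfin := IH y (fun i hi => hcov i (by omega)) q hqhead hqlast
      have hql : q.length = k - 1 := rfl
      omega

open IsLocalRing in
/-- Faithful flatness fact: membership in an extended ideal pulls back, for a flat
local homomorphism of local rings. -/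
theorem mem_of_algebraMap_mem_map_aux
    {R S : Type*} [CommRing R] [CommRing S] [IsLocalRing R] [IsLocalRing S]
    [Algebra R S] [IsLocalHom (algebraMap R S)] [Module.Flat R S]
    (hm : (maximalIdeal R).map (algebraMap R S) = maximalIdeal S)
    (K : Ideal R) (a : R) (ha : algebraMap R S a ∈ K.map (algebraMap R S)) :
    a ∈ K := by
  by_contra hnk
  set φ := algebraMap R S
  set C : Ideal R := Submodule.comap (LinearMap.lsmul R R a) K with hC
  have hC_ne_top : C ≠ ⊤ := by
    intro h
    apply hnk
    have h1 : (1 : R) ∈ C := h ▸ Submodule.mem_top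
    rw [hC, Submodule.mem_comap] at h1
    simpa using h1
  have hCm : C ≤ maximalIdeal R := le_maximalIdeal hC_ne_top
  set g : (R ⧸ C) →ₗ[R] (R ⧸ K) :=
    Submodule.mapQ C K (LinearMap.lsmul R R a) le_rfl with hg
  have hgmk : ∀ r : R, g (Ideal.Quotient.mk C r) = Ideal.Quotient.mk K (a * r) := by
    intro r
    show Submodule.mapQ C K (LinearMap.lsmul R R a) le_rfl (Submodule.Quotient.mk r)
      = Submodule.Quotient.mk (a * r)
    rw [Submodule.mapQ_apply]
    simp
  have hginj : Function.Injective g := by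
    rw [← LinearMap.ker_eq_bot, eq_bot_iff]
    rintro x hx
    obtain ⟨r, rfl⟩ := Ideal.Quotient.mk_surjective (I := C) x
    rw [LinearMap.mem_ker, hgmk r] at hx
    have hr : a * r ∈ K := (Ideal.Quotient.eq_zero_iff_mem).mp hx
    have hrC : r ∈ C := by
      rw [hC, Submodule.mem_comap]
      simpa using hr
    simpa [Submodule.mem_bot, Ideal.Quotient.eq_zero_iff_mem] using hrC
  have htens : Function.Injective (LinearMap.lTensor S g) :=
    Module.Flat.lTensor_preserves_injective_linearMap g hginj
  have hzeroK : (1 : S) ⊗ₜ[R] (Ideal.Quotient.mk K a) = 0 := by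
    apply (LinearEquiv.map_eq_zero_iff (TensorProduct.tensorQuotEquivQuotSMul S K)).mp
    rw [TensorProduct.tensorQuotEquivQuotSMul_tmul_mk]
    rw [Submodule.Quotient.mk_eq_zero]
    rw [Ideal.smul_top_eq_map, Submodule.restrictScalars_mem]
    have : a • (1 : S) = φ a := by rw [Algebra.smul_def, mul_one]
    rw [this]
    exact ha
  have h10 : ((1 : S) ⊗ₜ[R] (Ideal.Quotient.mk C 1)) = 0 := by
    apply htens
    rw [map_zero, LinearMap.lTensor_tmul, hgmk 1, mul_one, hzeroK]
  have h1CS : (1 : S) ∈ C.map φ := by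
    have h2 := (LinearEquiv.map_eq_zero_iff
      (TensorProduct.tensorQuotEquivQuotSMul S C)).mpr h10
    rw [TensorProduct.tensorQuotEquivQuotSMul_tmul_mk,
      Submodule.Quotient.mk_eq_zero, Ideal.smul_top_eq_map,
      Submodule.restrictScalars_mem] at h2
    simpa using h2
  have hle : C.map φ ≤ maximalIdeal S := hm ▸ Ideal.map_mono hCm
  exact (Ideal.ne_top_iff_one _).mp (maximalIdeal.isMaximal S).ne_top (hle h1CS)

/-- Strict monotonicity of `map p.mkQ` on submodules containing `p`. -/
theorem map_mkQ_lt_map_mkQ_aux {R M : Type*} [Ring R] [AddCommGroup M] [Module R M]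
    (p : Submodule R M) {A B : Submodule R M} (hpA : p ≤ A) (h : A < B) :
    A.map p.mkQ < B.map p.mkQ := by
  refine lt_of_le_of_ne (Submodule.map_mono h.le) (fun he => ?_)
  have hA : Submodule.comap p.mkQ (Submodule.map p.mkQ A) = A := by
    rw [Submodule.comap_map_mkQ, sup_eq_right.mpr hpA]
  have hB : Submodule.comap p.mkQ (Submodule.map p.mkQ B) = B := by
    rw [Submodule.comap_map_mkQ, sup_eq_right.mpr (hpA.trans h.le)]
  exact h.ne (by rw [← hA, ← hB, he])

/-- Strict monotonicity of `comap p.mkQ`. -/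
theorem comap_mkQ_lt_comap_mkQ_aux {R M : Type*} [Ring R] [AddCommGroup M] [Module R M]
    (p : Submodule R M) {N₁ N₂ : Submodule R (M ⧸ p)} (h : N₁ < N₂) :
    N₁.comap p.mkQ < N₂.comap p.mkQ := by
  refine lt_of_le_of_ne (Submodule.comap_mono h.le) (fun he => ?_)
  exact h.ne (by
    rw [← Submodule.map_comap_eq_of_surjective (Submodule.mkQ_surjective p) N₁,
      ← Submodule.map_comap_eq_of_surjective (Submodule.mkQ_surjective p) N₂, he])

/-- `comap p.mkQ` preserves covers. -/
theorem comap_mkQ_covBy_aux {R M : Type*} [Ring R] [AddCommGroup M] [Module R M]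
    (p : Submodule R M) {N₁ N₂ : Submodule R (M ⧸ p)} (h : N₁ ⋖ N₂) :
    N₁.comap p.mkQ ⋖ N₂.comap p.mkQ := by
  refine ⟨comap_mkQ_lt_comap_mkQ_aux p h.lt, fun {L} h1 h2 => ?_⟩
  have hpL : p ≤ N₁.comap p.mkQ := by
    intro x hx
    show p.mkQ x ∈ N₁
    have : p.mkQ x = 0 := by
      rw [Submodule.mkQ_apply, Submodule.Quotient.mk_eq_zero]; exact hx
    rw [this]; exact N₁.zero_mem
  have hm1 : N₁ < Submodule.map p.mkQ L := by
    have := map_mkQ_lt_map_mkQ_aux p hpL h1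
    rwa [Submodule.map_comap_eq_of_surjective (Submodule.mkQ_surjective p) N₁] at this
  have hm2 : Submodule.map p.mkQ L < N₂ := by
    have := map_mkQ_lt_map_mkQ_aux p (hpL.trans h1.le) h2
    rwa [Submodule.map_comap_eq_of_surjective (Submodule.mkQ_surjective p) N₂] at this
  exact h.2 hm1 hm2

/-- `map p.mkQ` preserves covers among submodules containing `p`. -/
theorem map_mkQ_covBy_aux {R M : Type*} [Ring R] [AddCommGroup M] [Module R M]
    (p : Submodule R M) {A B : Submodule R M} (hpA : p ≤ A) (h : A ⋖ B) :
    A.map p.mkQ ⋖ B.map p.mkQ := by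
  refine ⟨map_mkQ_lt_map_mkQ_aux p hpA h.lt, fun {L} h1 h2 => ?_⟩
  have hA : Submodule.comap p.mkQ (Submodule.map p.mkQ A) = A := by
    rw [Submodule.comap_map_mkQ, sup_eq_right.mpr hpA]
  have hB : Submodule.comap p.mkQ (Submodule.map p.mkQ B) = B := by
    rw [Submodule.comap_map_mkQ, sup_eq_right.mpr (hpA.trans h.le)]
  have hm1 : A < Submodule.comap p.mkQ L := by
    have := comap_mkQ_lt_comap_mkQ_aux p h1
    rwa [hA] at this
  have hm2 : Submodule.comap p.mkQ L < B := by
    have := comap_mkQ_lt_comap_mkQ_aux p h2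
    rwa [hB] at this
  exact h.2 hm1 hm2

open IsLocalRing in
/-- Extension of ideals along a flat local homomorphism with `m_R S = m_S`
preserves covers in the ideal lattices. -/
theorem map_covBy_map_aux
    {R S : Type*} [CommRing R] [CommRing S] [IsLocalRing R] [IsLocalRing S]
    [Algebra R S] [IsLocalHom (algebraMap R S)] [Module.Flat R S]
    (hm : (maximalIdeal R).map (algebraMap R S) = maximalIdeal S)
    {K₁ K₂ : Ideal R} (hcov : K₁ ⋖ K₂) :
    K₁.map (algebraMap R S) ⋖ K₂.map (algebraMap R S) := by
  set φ := algebraMap R S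
  have hmap_strict : ∀ {A B : Ideal R}, A < B → A.map φ < B.map φ := by
    intro A B h
    refine lt_of_le_of_ne (Ideal.map_mono h.le) (fun he => ?_)
    refine h.ne (le_antisymm h.le (fun a ha => ?_))
    exact mem_of_algebraMap_mem_map_aux hm A a
      (he ▸ Ideal.mem_map_of_mem φ ha)
  have hlt : K₁.map φ < K₂.map φ := hmap_strict hcov.lt
  obtain ⟨a₀, ha₀K₂, ha₀K₁⟩ := SetLike.exists_of_lt hcov.lt
  have hspan : K₁ ⊔ Ideal.span {a₀} = K₂ := by
    have hle : K₁ ⊔ Ideal.span {a₀} ≤ K₂ :=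
      sup_le hcov.lt.le (Ideal.span_le.mpr (Set.singleton_subset_iff.mpr ha₀K₂))
    rcases hcov.wcovBy.eq_or_eq (le_sup_left : K₁ ≤ _) hle with h | h
    · exact absurd (h ▸ (le_sup_right.trans h.le) (Ideal.subset_span rfl)) ha₀K₁
    · exact h
  have hmul : maximalIdeal R * K₂ ≤ K₁ := by
    set T := K₁ ⊔ maximalIdeal R * Ideal.span {a₀} with hT
    have hTle : T ≤ K₂ :=
      sup_le hcov.lt.le (Ideal.mul_le_right.trans
        (Ideal.span_le.mpr (Set.singleton_subset_iff.mpr ha₀K₂)))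
    rcases hcov.wcovBy.eq_or_eq (le_sup_left : K₁ ≤ T) hTle with h | h
    · have h1 : maximalIdeal R * Ideal.span {a₀} ≤ K₁ := le_sup_right.trans h.le
      calc maximalIdeal R * K₂ = maximalIdeal R * (K₁ ⊔ Ideal.span {a₀}) := by rw [hspan]
        _ = maximalIdeal R * K₁ ⊔ maximalIdeal R * Ideal.span {a₀} := Ideal.mul_sup _ _ _
        _ ≤ K₁ := sup_le Ideal.mul_le_right h1
    · exfalso
      have ha₀T : a₀ ∈ T := by rw [hT, h]; exact ha₀K₂
      obtain ⟨y, hy, z, hz, hyz⟩ := Submodule.mem_sup.mp ha₀T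
      rw [mul_comm] at hz
      obtain ⟨m₀, hm₀, hma⟩ := Ideal.mem_span_singleton_mul.mp hz
      have hkey : (1 - m₀) * a₀ = y := by
        have : y = a₀ - z := by rw [← hyz]; ring
        rw [this, ← hma]; ring
      have hu : IsUnit (1 - m₀) :=
        IsLocalRing.isUnit_one_sub_self_of_mem_nonunits m₀ hm₀
      apply ha₀K₁
      have hyK₁ : (1 - m₀) * a₀ ∈ K₁ := by rw [hkey]; exact hy
      have h2 : ((hu.unit⁻¹ : Rˣ) : R) * ((1 - m₀) * a₀) ∈ K₁ :=
        K₁.mul_mem_left _ hyK₁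
      have h3 : ((hu.unit⁻¹ : Rˣ) : R) * ((1 - m₀) * a₀) = a₀ := by
        rw [← mul_assoc]
        nth_rewrite 2 [← hu.unit_spec]
        rw [Units.inv_mul, one_mul]
      rwa [h3] at h2
  have hBdec : K₂.map φ = K₁.map φ ⊔ Ideal.span {φ a₀} := by
    rw [← hspan, Ideal.map_sup, Ideal.map_span, Set.image_singleton]
  refine ⟨hlt, fun {L} h1 h2 => ?_⟩
  by_cases hφa : φ a₀ ∈ L
  · refine h2.not_ge ?_
    rw [hBdec]
    exact sup_le h1.le (Ideal.span_le.mpr (Set.singleton_subset_iff.mpr hφa))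
  · refine h1.not_ge (fun x hx => ?_)
    have hxK₂ : x ∈ K₂.map φ := h2.le hx
    rw [hBdec] at hxK₂
    obtain ⟨y, hy, z, hz, hyz⟩ := Submodule.mem_sup.mp hxK₂
    obtain ⟨s, hs⟩ := Ideal.mem_span_singleton'.mp hz
    by_cases hsu : IsUnit s
    · exfalso
      apply hφa
      have hzL : z ∈ L := by
        have hzxy : z = x - y := by rw [← hyz]; ring
        rw [hzxy]
        exact Submodule.sub_mem L hx (h1.le hy)
      obtain ⟨u, rfl⟩ := hsu
      have he : φ a₀ = ((u⁻¹ : Sˣ) : S) * z := by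
        rw [← hs, ← mul_assoc, Units.inv_mul, one_mul]
      rw [he]
      exact L.mul_mem_left _ hzL
    · have hsm : s ∈ maximalIdeal S := (IsLocalRing.mem_maximalIdeal s).mpr hsu
      have hzK₁ : z ∈ K₁.map φ := by
        have ha' : z ∈ maximalIdeal S * K₂.map φ := by
          rw [← hs]
          exact Ideal.mul_mem_mul hsm (Ideal.mem_map_of_mem φ ha₀K₂)
        have hb' : maximalIdeal S * K₂.map φ ≤ K₁.map φ := by
          rw [← hm, ← Ideal.map_mul]
          exact Ideal.map_mono hmul
        exact hb' ha'
      have hxyz : x = y + z := hyz.symm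
      rw [hxyz]
      exact Submodule.add_mem _ hy hzK₁

end Aux

/-- The length of a module, valued in `ℕ∞`: the height of `⊤` in the lattice of
submodules, i.e. the supremum of lengths of strictly increasing chains of submodules. -/
noncomputable def moduleLength (R M : Type*) [Ring R] [AddCommGroup M] [Module R M] : ℕ∞ :=
  Order.height (⊤ : Submodule R M)

/-- If `φ : R → S` is a local homomorphism of local rings such that `S` is flat over `R`
and `m_R · S = m_S`, then for every ideal `I` of `R` the length of `S/IS` as an `S`-module
equals the length of `R/I` as an `R`-module.  (This is the algebraic content of the fact
that algebraic multiplicity is preserved by étale morphisms.) -/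
theorem length_quotient_eq_of_flat_of_maximalIdeal_map_eq
    (R S : Type*) [CommRing R] [CommRing S] [IsLocalRing R] [IsLocalRing S]
    [Algebra R S] [IsLocalHom (algebraMap R S)] [Module.Flat R S]
    (hm : (IsLocalRing.maximalIdeal R).map (algebraMap R S) = IsLocalRing.maximalIdeal S) :
    ∀ I : Ideal R,
      moduleLength S (S ⧸ I.map (algebraMap R S)) = moduleLength R (R ⧸ I) := by
  intro I
  set φ := algebraMap R S with hφ
  set J := I.map φ with hJdef
  set F : Submodule R (R ⧸ I) → Submodule S (S ⧸ J) :=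
    fun N => Submodule.map J.mkQ (Ideal.map φ (Submodule.comap I.mkQ N)) with hF
  have hI_le : ∀ N : Submodule R (R ⧸ I), I ≤ Submodule.comap I.mkQ N := by
    intro N x hx
    show I.mkQ x ∈ N
    have hx0 : I.mkQ x = 0 := by
      rw [Submodule.mkQ_apply, Submodule.Quotient.mk_eq_zero]; exact hx
    rw [hx0]; exact N.zero_mem
  have hmapφ_strict : ∀ {A B : Ideal R}, A < B → A.map φ < B.map φ := by
    intro A B h
    refine lt_of_le_of_ne (Ideal.map_mono h.le) (fun he => ?_)
    refine h.ne (le_antisymm h.le (fun a ha => ?_))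
    exact mem_of_algebraMap_mem_map_aux hm A a (he ▸ Ideal.mem_map_of_mem φ ha)
  have hJ_le : ∀ N : Submodule R (R ⧸ I), J ≤ Ideal.map φ (Submodule.comap I.mkQ N) :=
    fun N => Ideal.map_mono (hI_le N)
  have hF_strict : StrictMono F := by
    intro N₁ N₂ h
    simp only [hF]
    exact map_mkQ_lt_map_mkQ_aux J (hJ_le N₁)
      (hmapφ_strict (comap_mkQ_lt_comap_mkQ_aux I h))
  have hF_top : F ⊤ = ⊤ := by
    simp only [hF]
    rw [Submodule.comap_top, Ideal.map_top, Submodule.map_top, Submodule.range_mkQ]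
  have hF_bot : F ⊥ = ⊥ := by
    simp only [hF]
    rw [Submodule.comap_bot, Submodule.ker_mkQ]
    rw [eq_bot_iff, Submodule.map_le_iff_le_comap, Submodule.comap_bot, Submodule.ker_mkQ]
  have hge : Order.height (⊤ : Submodule R (R ⧸ I)) ≤
      Order.height (⊤ : Submodule S (S ⧸ J)) := by
    have h := Order.height_le_height_apply_of_strictMono F hF_strict ⊤
    rwa [hF_top] at h
  rcases eq_or_ne (moduleLength R (R ⧸ I)) ⊤ with htop | hne
  · refine le_antisymm ?_ hge
    rw [htop]; exact le_top
  · obtain ⟨n, hn⟩ := WithTop.ne_top_iff_exists.mp hne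
    have hn' : Order.height (⊤ : Submodule R (R ⧸ I)) = (n : ℕ∞) := hn.symm
    obtain ⟨p, hplast, hplen⟩ := Order.exists_series_of_height_eq_coe ⊤ hn'
    have hbound : ∀ q : LTSeries (Submodule R (R ⧸ I)), (q.length : ℕ∞) ≤ n := by
      intro q
      rw [← hn']
      exact Order.length_le_height le_top
    have hphead : p.head = ⊥ := by
      by_contra hnb
      have hb : (⊥ : Submodule R (R ⧸ I)) < p.head := bot_lt_iff_ne_bot.mpr hnb
      have hc := hbound (p.cons ⊥ hb)
      simp only [RelSeries.cons_length, hplen] at hc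
      have hc' : n + 1 ≤ n := by exact_mod_cast hc
      omega
    have hcovs : ∀ i : Fin p.length, p i.castSucc ⋖ p i.succ := by
      intro i
      by_contra hnc
      obtain ⟨m, hm1, hm2⟩ := (not_covBy_iff (p.step i)).mp hnc
      have hc := hbound (p.insertNth i m hm1 hm2)
      simp only [RelSeries.insertNth_length, hplen] at hc
      have hc' : n + 1 ≤ n := by exact_mod_cast hc
      omega
    set z : ℕ → Submodule S (S ⧸ J) := fun i => F (p ⟨min i p.length, by omega⟩) with hz
    have hzcov : ∀ i < p.length, z i ⋖ z (i + 1) := by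
      intro i hi
      have e1 : (⟨min i p.length, by omega⟩ : Fin (p.length + 1)) =
          (⟨i, hi⟩ : Fin p.length).castSucc := by
        apply Fin.ext; simp [Nat.min_eq_left hi.le]
      have e2 : (⟨min (i + 1) p.length, by omega⟩ : Fin (p.length + 1)) =
          (⟨i, hi⟩ : Fin p.length).succ := by
        apply Fin.ext; simp [Fin.val_succ]; omega
      simp only [hz]
      rw [e1, e2]
      have hc := hcovs ⟨i, hi⟩
      have hKcov := comap_mkQ_covBy_aux I hc
      have hScov := map_covBy_map_aux hm hKcov
      simp only [hF]
      exact map_mkQ_covBy_aux J (hJ_le _) hScov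
    have hle : Order.height (⊤ : Submodule S (S ⧸ J)) ≤ (n : ℕ∞) := by
      apply Order.height_le
      intro q hq
      have hzq := covchain_bound_aux p.length z hzcov q ?_ ?_
      · rw [← hplen]
        exact_mod_cast Nat.cast_le.mpr hzq
      · have hz0 : z 0 = ⊥ := by
          simp only [hz]
          have e : (⟨min 0 p.length, by omega⟩ : Fin (p.length + 1)) = 0 := by
            apply Fin.ext; simp
          rw [e]
          show F p.head = ⊥
          rw [hphead, hF_bot]
        rw [hz0]; exact bot_le
      · have hztop : z p.length = ⊤ := by
          simp only [hz]
          have e : (⟨min p.length p.length, by omega⟩ : Fin (p.length + 1)) =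
              Fin.last p.length := by
            apply Fin.ext; simp
          rw [e]
          show F p.last = ⊤
          rw [hplast, hF_top]
        rw [hztop, hq]
    exact le_antisymm (by rw [← hn]; exact hle) hge
end

section
/- Let L be a field and let F ∈ L[x₁,…,xₙ] be a polynomial that is regular in xₙ, i.e., F(0,…,0,xₙ) is a nonzero polynomial in xₙ. Suppose F = U·G in the formal power series ring L[[x₁,…,xₙ]], where U is a unit of L[[x₁,…,xₙ]] and G = xₙ^m + a₁·xₙ^{m−1} + ⋯ + a_m is a Weierstrass polynomial in xₙ, i.e., each aᵢ ∈ L[[x₁,…,x_{n−1}]] has zero constant coefficient. Then each coefficient aᵢ is algebraic over the polynomial ring L[x₁,…,x_{n−1}], and U is algebraic over L[x₁,…,xₙ]. -/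
open MvPolynomial MvPowerSeries

/-- The embedding of the polynomial ring `L[x₁,…,xₙ]` into the formal power series ring
`L[[x₁,…,x_{n+1}]]` (the last variable is not used). -/
noncomputable def polyToBigPS (L : Type) [Field L] (n : ℕ) :
    MvPolynomial (Fin n) L →+* MvPowerSeries (Fin (n + 1)) L :=
  MvPolynomial.coeToMvPowerSeries.ringHom.comp
    (MvPolynomial.rename (Fin.castSucc : Fin n → Fin (n + 1))).toRingHom

namespace WDA

variable {n : ℕ}

noncomputable def cmb (e : Fin n →₀ ℕ) (k : ℕ) : Fin (n + 1) →₀ ℕ :=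
  Finsupp.equivFunOnFinite.symm (Fin.snoc e k)

@[simp] lemma cmb_apply_last (e : Fin n →₀ ℕ) (k : ℕ) :
    cmb e k (Fin.last n) = k := by
  simp [cmb, Fin.snoc_last]

noncomputable def res (d : Fin (n + 1) →₀ ℕ) : Fin n →₀ ℕ :=
  Finsupp.equivFunOnFinite.symm (fun i => d (Fin.castSucc i))

@[simp] lemma res_cmb (e : Fin n →₀ ℕ) (k : ℕ) : res (cmb e k) = e := by
  ext i; simp [res, cmb]

@[simp] lemma cmb_zero : (cmb 0 0 : Fin (n + 1) →₀ ℕ) = 0 := by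
  ext i
  induction i using Fin.lastCases with
  | last => simp
  | cast i => simp [cmb]

lemma res_add (u v : Fin (n + 1) →₀ ℕ) : res (u + v) = res u + res v := by
  ext i; simp [res, Finsupp.add_apply]

@[simp] lemma res_zero : res (0 : Fin (n + 1) →₀ ℕ) = 0 := by
  ext i; simp [res]

lemma cmb_add (e e' : Fin n →₀ ℕ) (k k' : ℕ) :
    cmb (e + e') (k + k') = cmb e k + cmb e' k' := by
  ext i
  induction i using Fin.lastCases with
  | last => simp
  | cast i => simp [cmb]

@[simp] lemma cmb_res (d : Fin (n + 1) →₀ ℕ) : cmb (res d) (d (Fin.last n)) = d := by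
  ext i
  induction i using Fin.lastCases with
  | last => simp
  | cast i => simp [res, cmb]


variable {L : Type} [Field L]

noncomputable def psiFun (f : MvPowerSeries (Fin (n + 1)) L) :
    PowerSeries (MvPowerSeries (Fin n) L) :=
  fun kk => fun e => f (cmb e (kk ()))

lemma coeff_psiFun (f : MvPowerSeries (Fin (n + 1)) L) (k : ℕ) (e : Fin n →₀ ℕ) :
    MvPowerSeries.coeff e (PowerSeries.coeff (R := MvPowerSeries (Fin n) L) k (psiFun f))
      = MvPowerSeries.coeff (cmb e k) f := by
  show f (cmb e ((Finsupp.single () k) ())) = f (cmb e k)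
  simp

lemma psiFun_one : psiFun (1 : MvPowerSeries (Fin (n + 1)) L) = 1 := by
  classical
  apply PowerSeries.ext; intro k
  apply MvPowerSeries.ext; intro e
  rw [coeff_psiFun]
  rw [MvPowerSeries.coeff_one]
  by_cases hk : k = 0
  · subst hk
    by_cases he : e = 0
    · subst he
      simp
    · have : cmb e 0 ≠ 0 := by
        intro h
        apply he
        have := congrArg res h
        rw [res_cmb, res_zero] at this
        exact this
      rw [if_neg this]
      simp [PowerSeries.coeff_one, he, MvPowerSeries.coeff_one]
  · have : cmb e k ≠ 0 := by
      intro h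
      apply hk
      have := congrArg (fun d => d (Fin.last n)) h
      simpa using this
    rw [if_neg this]
    simp [PowerSeries.coeff_one, hk]

lemma psiFun_mul (f g : MvPowerSeries (Fin (n + 1)) L) :
    psiFun (f * g) = psiFun f * psiFun g := by
  classical
  apply PowerSeries.ext; intro k
  apply MvPowerSeries.ext; intro e
  rw [coeff_psiFun, PowerSeries.coeff_mul, map_sum, MvPowerSeries.coeff_mul]
  have : ∀ p ∈ Finset.HasAntidiagonal.antidiagonal k,
      MvPowerSeries.coeff e (PowerSeries.coeff (R := MvPowerSeries (Fin n) L) p.1 (psiFun f)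
        * PowerSeries.coeff (R := MvPowerSeries (Fin n) L) p.2 (psiFun g))
      = ∑ r ∈ Finset.HasAntidiagonal.antidiagonal e,
          MvPowerSeries.coeff (cmb r.1 p.1) f * MvPowerSeries.coeff (cmb r.2 p.2) g := by
    intro p _
    rw [MvPowerSeries.coeff_mul]
    exact Finset.sum_congr rfl fun r _ => by rw [coeff_psiFun, coeff_psiFun]
  rw [Finset.sum_congr rfl this, ← Finset.sum_product']
  refine Finset.sum_nbij' (fun u => ((u.1 (Fin.last n), u.2 (Fin.last n)), (res u.1, res u.2)))
    (fun z => (cmb z.2.1 z.1.1, cmb z.2.2 z.1.2)) ?_ ?_ ?_ ?_ ?_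
  · rintro ⟨u, v⟩ hu
    rw [Finset.HasAntidiagonal.mem_antidiagonal] at hu
    simp only [Finset.mem_product, Finset.HasAntidiagonal.mem_antidiagonal]
    constructor
    · have := congrArg (fun d => d (Fin.last n)) hu
      simpa [Finsupp.add_apply] using this
    · have := congrArg res hu
      rw [res_cmb, res_add] at this
      exact this
  · rintro ⟨⟨k1, k2⟩, ⟨e1, e2⟩⟩ hz
    simp only [Finset.mem_product, Finset.HasAntidiagonal.mem_antidiagonal] at hz
    rw [Finset.HasAntidiagonal.mem_antidiagonal]
    rw [← cmb_add, hz.1, hz.2]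
  · rintro ⟨u, v⟩ _
    simp [cmb_res]
  · rintro ⟨⟨k1, k2⟩, ⟨e1, e2⟩⟩ _
    simp
  · rintro ⟨u, v⟩ _
    simp only [cmb_res]

/-- The splitting homomorphism. -/
noncomputable def psi (L : Type) [Field L] (n : ℕ) :
    MvPowerSeries (Fin (n + 1)) L →+* PowerSeries (MvPowerSeries (Fin n) L) where
  toFun := psiFun
  map_one' := psiFun_one
  map_mul' := psiFun_mul
  map_zero' := by funext kk e; rfl
  map_add' := by intro f g; funext kk e; rfl

lemma coeff_psi (f : MvPowerSeries (Fin (n + 1)) L) (k : ℕ) (e : Fin n →₀ ℕ) :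
    MvPowerSeries.coeff e (PowerSeries.coeff (R := MvPowerSeries (Fin n) L) k (psi L n f))
      = MvPowerSeries.coeff (cmb e k) f :=
  coeff_psiFun f k e

lemma psi_injective : Function.Injective (psi L n) := by
  intro f g h
  apply MvPowerSeries.ext; intro d
  have := congrArg (fun x => MvPowerSeries.coeff (res d)
    (PowerSeries.coeff (R := MvPowerSeries (Fin n) L) (d (Fin.last n)) x)) h
  simpa only [coeff_psi, cmb_res] using this


lemma single_last_eq_cmb : (Finsupp.single (Fin.last n) 1 : Fin (n + 1) →₀ ℕ) = cmb 0 1 := by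
  ext i
  induction i using Fin.lastCases with
  | last => simp
  | cast i => simp [cmb, Finsupp.single_apply, (Fin.castSucc_lt_last i).ne']

lemma single_castSucc_eq_cmb (i : Fin n) :
    (Finsupp.single (Fin.castSucc i) 1 : Fin (n + 1) →₀ ℕ) = cmb (Finsupp.single i 1) 0 := by
  ext j
  induction j using Fin.lastCases with
  | last => simp [Finsupp.single_apply, (Fin.castSucc_lt_last i).ne]
  | cast j => simp [cmb, Finsupp.single_apply, Fin.castSucc_inj]

lemma cmb_eq_cmb_iff {e e' : Fin n →₀ ℕ} {k k' : ℕ} :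
    cmb e k = cmb e' k' ↔ e = e' ∧ k = k' := by
  constructor
  · intro h
    refine ⟨?_, ?_⟩
    · have := congrArg res h; simpa using this
    · have := congrArg (fun d => d (Fin.last n)) h; simpa using this
  · rintro ⟨rfl, rfl⟩; rfl

/-- restriction of a power series not involving the last variable -/
noncomputable def ares (f : MvPowerSeries (Fin (n + 1)) L) : MvPowerSeries (Fin n) L :=
  PowerSeries.coeff (R := MvPowerSeries (Fin n) L) 0 (psi L n f)

lemma coeff_ares (f : MvPowerSeries (Fin (n + 1)) L) (e : Fin n →₀ ℕ) :
    MvPowerSeries.coeff e (ares f) = MvPowerSeries.coeff (cmb e 0) f :=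
  coeff_psi f 0 e

lemma psi_eq_C_ares (f : MvPowerSeries (Fin (n + 1)) L)
    (hf : ∀ d : Fin (n + 1) →₀ ℕ, d (Fin.last n) ≠ 0 → MvPowerSeries.coeff d f = 0) :
    psi L n f = PowerSeries.C (R := MvPowerSeries (Fin n) L) (ares f) := by
  apply PowerSeries.ext; intro k
  rcases Nat.eq_zero_or_pos k with rfl | hk
  · rw [PowerSeries.coeff_C, if_pos rfl]
    rfl
  · rw [PowerSeries.coeff_C, if_neg (Nat.pos_iff_ne_zero.mp hk)]
    apply MvPowerSeries.ext; intro e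
    rw [coeff_psi, map_zero]
    exact hf _ (by simp [Nat.pos_iff_ne_zero.mp hk])

lemma constantCoeff_ares (f : MvPowerSeries (Fin (n + 1)) L)
    (hf : MvPowerSeries.constantCoeff f = 0) :
    MvPowerSeries.constantCoeff (σ := Fin n) (R := L) (ares f) = 0 := by
  rw [← MvPowerSeries.coeff_zero_eq_constantCoeff, coeff_ares, cmb_zero,
    MvPowerSeries.coeff_zero_eq_constantCoeff]
  exact hf

lemma psi_C (l : L) :
    psi L n (MvPowerSeries.C (σ := Fin (n + 1)) (R := L) l)
      = PowerSeries.C (R := MvPowerSeries (Fin n) L) (MvPowerSeries.C (σ := Fin n) (R := L) l) := by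
  classical
  rw [psi_eq_C_ares]
  · congr 1
    apply MvPowerSeries.ext; intro e
    rw [coeff_ares]
    rcases eq_or_ne e 0 with rfl | he
    · simp
    · rw [MvPowerSeries.coeff_C, MvPowerSeries.coeff_C, if_neg he, if_neg]
      intro h
      exact he (by simpa using (cmb_eq_cmb_iff.mp (by rw [h, cmb_zero])).1)
  · intro d hd
    rw [MvPowerSeries.coeff_C, if_neg]
    intro h; subst h; simp at hd

lemma psi_X_last :
    psi L n (MvPowerSeries.X (Fin.last n) : MvPowerSeries (Fin (n + 1)) L)
      = PowerSeries.X := by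
  classical
  apply PowerSeries.ext; intro k
  apply MvPowerSeries.ext; intro e
  rw [coeff_psi, MvPowerSeries.coeff_X, PowerSeries.coeff_X, single_last_eq_cmb]
  rcases eq_or_ne k 1 with rfl | hk
  · rw [if_pos rfl]
    rcases eq_or_ne e 0 with rfl | he
    · simp
    · rw [if_neg (by rw [cmb_eq_cmb_iff]; rintro ⟨h, -⟩; exact he h), MvPowerSeries.coeff_one,
        if_neg he]
  · rw [if_neg hk, if_neg (by rw [cmb_eq_cmb_iff]; rintro ⟨-, h⟩; exact hk h), map_zero]

lemma psi_X_castSucc (i : Fin n) :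
    psi L n (MvPowerSeries.X (Fin.castSucc i) : MvPowerSeries (Fin (n + 1)) L)
      = PowerSeries.C (R := MvPowerSeries (Fin n) L) (MvPowerSeries.X i) := by
  classical
  rw [psi_eq_C_ares]
  · congr 1
    apply MvPowerSeries.ext; intro e
    rw [coeff_ares, MvPowerSeries.coeff_X, MvPowerSeries.coeff_X, single_castSucc_eq_cmb]
    by_cases h : e = Finsupp.single i 1
    · subst h; simp
    · rw [if_neg h, if_neg (by rw [cmb_eq_cmb_iff]; rintro ⟨h', -⟩; exact h h')]
  · intro d hd
    rw [MvPowerSeries.coeff_X, if_neg]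
    intro h; subst h
    simp [Finsupp.single_apply, (Fin.castSucc_lt_last i).ne] at hd


/-- Separate the last variable of a multivariate polynomial. -/
noncomputable def theta0 (L : Type) [Field L] (n : ℕ) :
    MvPolynomial (Fin (n + 1)) L →+* Polynomial (MvPolynomial (Fin n) L) :=
  MvPolynomial.eval₂Hom (Polynomial.C.comp MvPolynomial.C)
    (fun j => Fin.lastCases Polynomial.X (fun i => Polynomial.C (MvPolynomial.X i)) j)

/-- Inclusion of polynomials into power series in `n` variables. -/
noncomputable def rho (L : Type) [Field L] (n : ℕ) :
    MvPolynomial (Fin n) L →+* MvPowerSeries (Fin n) L :=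
  MvPolynomial.coeToMvPowerSeries.ringHom

lemma psi_comp_coe :
    (psi L n).comp (MvPolynomial.coeToMvPowerSeries.ringHom :
        MvPolynomial (Fin (n + 1)) L →+* MvPowerSeries (Fin (n + 1)) L)
      = (Polynomial.coeToPowerSeries.ringHom).comp
          ((Polynomial.mapRingHom (rho L n)).comp (theta0 L n)) := by
  apply MvPolynomial.ringHom_ext
  · intro l
    simp only [RingHom.comp_apply, Polynomial.coe_mapRingHom, MvPolynomial.coeToMvPowerSeries.ringHom_apply,
      Polynomial.coeToPowerSeries.ringHom_apply, theta0, MvPolynomial.eval₂Hom_C,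
      Polynomial.map_C, Polynomial.coe_C, MvPolynomial.coe_C]
    rw [psi_C]
    congr 1
    simp [rho, MvPolynomial.coe_C]
  · intro j
    induction j using Fin.lastCases with
    | last =>
      simp only [RingHom.comp_apply, Polynomial.coe_mapRingHom, MvPolynomial.coeToMvPowerSeries.ringHom_apply,
        Polynomial.coeToPowerSeries.ringHom_apply, theta0, MvPolynomial.eval₂Hom_X',
        Fin.lastCases_last, Polynomial.map_X, Polynomial.coe_X, MvPolynomial.coe_X]
      exact psi_X_last
    | cast i =>
      simp only [RingHom.comp_apply, Polynomial.coe_mapRingHom, MvPolynomial.coeToMvPowerSeries.ringHom_apply,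
        Polynomial.coeToPowerSeries.ringHom_apply, theta0, MvPolynomial.eval₂Hom_X',
        Fin.lastCases_castSucc, Polynomial.map_C, Polynomial.coe_C, MvPolynomial.coe_X]
      rw [psi_X_castSucc]
      congr 1
      simp [rho, MvPolynomial.coe_X]

lemma psi_comp_polyToBigPS :
    (psi L n).comp (polyToBigPS L n)
      = (PowerSeries.C (R := MvPowerSeries (Fin n) L)).comp (rho L n) := by
  apply MvPolynomial.ringHom_ext
  · intro l
    simp only [RingHom.comp_apply, polyToBigPS, AlgHom.toRingHom_eq_coe, RingHom.coe_coe,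
      MvPolynomial.rename_C, MvPolynomial.coeToMvPowerSeries.ringHom_apply, MvPolynomial.coe_C]
    rw [psi_C]
    congr 1
    simp [rho, MvPolynomial.coe_C]
  · intro i
    simp only [RingHom.comp_apply, polyToBigPS, AlgHom.toRingHom_eq_coe, RingHom.coe_coe,
      MvPolynomial.rename_X, MvPolynomial.coeToMvPowerSeries.ringHom_apply, MvPolynomial.coe_X]
    rw [psi_X_castSucc]
    congr 1
    simp [rho, MvPolynomial.coe_X]


/-- Total degree of an exponent. -/
noncomputable def wt (e : Fin n →₀ ℕ) : ℕ := ∑ i : Fin n, e i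

lemma wt_add (e e' : Fin n →₀ ℕ) : wt (e + e') = wt e + wt e' := by
  simp [wt, Finsupp.add_apply, Finset.sum_add_distrib]

lemma wt_eq_zero_iff {e : Fin n →₀ ℕ} : wt e = 0 ↔ e = 0 := by
  constructor
  · intro h
    ext i
    have := Finset.sum_eq_zero_iff.mp h i (Finset.mem_univ i)
    simpa using this
  · rintro rfl; simp [wt]

lemma wt_lt_of_add {e₁ e₂ e : Fin n →₀ ℕ} (h : e₁ + e₂ = e) (h₂ : e₂ ≠ 0) :
    wt e₁ < wt e := by
  have := wt_add e₁ e₂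
  rw [h] at this
  have hpos : 0 < wt e₂ := Nat.pos_of_ne_zero (fun hz => h₂ (wt_eq_zero_iff.mp hz))
  omega

/-- Key uniqueness lemma: a power series annihilated (in high degrees) by multiplication
with a Weierstrass-type polynomial vanishes. -/
lemma key_lemma {m : ℕ} (g : Polynomial (MvPowerSeries (Fin n) L))
    (hdeg : g.degree ≤ (m : WithBot ℕ)) (hm : g.coeff m = 1)
    (hlt : ∀ j < m, MvPowerSeries.constantCoeff (σ := Fin n) (R := L) (g.coeff j) = 0)
    (V : PowerSeries (MvPowerSeries (Fin n) L))
    (hV : ∀ k, PowerSeries.coeff (R := MvPowerSeries (Fin n) L) (k + m)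
      (V * (g : PowerSeries (MvPowerSeries (Fin n) L))) = 0) :
    V = 0 := by
  classical
  have main : ∀ D : ℕ, ∀ e : Fin n →₀ ℕ, wt e = D → ∀ k : ℕ,
      MvPowerSeries.coeff e (PowerSeries.coeff (R := MvPowerSeries (Fin n) L) k V) = 0 := by
    intro D
    induction D using Nat.strong_induction_on with
    | _ D ih =>
      intro e hD k
      have h0 := hV k
      rw [PowerSeries.coeff_mul] at h0
      have h1 := congrArg (MvPowerSeries.coeff e) h0
      rw [map_sum, map_zero] at h1
      have hmem : (k, m) ∈ Finset.HasAntidiagonal.antidiagonal (k + m) := by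
        rw [Finset.HasAntidiagonal.mem_antidiagonal]
      have hother : ∀ p ∈ Finset.HasAntidiagonal.antidiagonal (k + m), p ≠ (k, m) →
          MvPowerSeries.coeff e (PowerSeries.coeff (R := MvPowerSeries (Fin n) L) p.1 V *
            PowerSeries.coeff (R := MvPowerSeries (Fin n) L) p.2
              (g : PowerSeries (MvPowerSeries (Fin n) L))) = 0 := by
        rintro ⟨u, v⟩ hp hne
        rw [Finset.HasAntidiagonal.mem_antidiagonal] at hp
        rw [Polynomial.coeff_coe]
        rcases lt_trichotomy v m with hv | rfl | hv
        · -- v < m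
          rw [MvPowerSeries.coeff_mul]
          apply Finset.sum_eq_zero
          rintro ⟨e₁, e₂⟩ hr
          rw [Finset.HasAntidiagonal.mem_antidiagonal] at hr
          rcases eq_or_ne e₂ 0 with rfl | he₂
          · have : MvPowerSeries.coeff (0 : Fin n →₀ ℕ) (g.coeff v) = 0 := by
              rw [MvPowerSeries.coeff_zero_eq_constantCoeff]
              exact hlt v hv
            rw [this, mul_zero]
          · have hlt' : wt e₁ < D := hD ▸ wt_lt_of_add hr he₂
            rw [ih _ hlt' e₁ rfl u, zero_mul]
        · -- v = m
          exact absurd (by omega : u = k) (fun h => hne (by simp [h]))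
        · -- v > m
          have : g.coeff v = 0 := by
            apply Polynomial.coeff_eq_zero_of_degree_lt
            exact lt_of_le_of_lt hdeg (by exact_mod_cast hv)
          rw [this, mul_zero, map_zero]
      rw [Finset.sum_eq_single_of_mem _ hmem hother] at h1
      rw [Polynomial.coeff_coe, hm, mul_one] at h1
      exact h1
  apply PowerSeries.ext; intro k
  apply MvPowerSeries.ext; intro e
  rw [map_zero, map_zero]
  exact main (wt e) e rfl k


/-- The Weierstrass polynomial over `R` built from coefficients `b`. -/
noncomputable def Gpoly (m : ℕ) (b : Fin m → MvPowerSeries (Fin n) L) :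
    Polynomial (MvPowerSeries (Fin n) L) :=
  Polynomial.X ^ m + ∑ i : Fin m, Polynomial.C (b i) * Polynomial.X ^ (m - 1 - (i : ℕ))

lemma Gpoly_coeff_m (m : ℕ) (b : Fin m → MvPowerSeries (Fin n) L) :
    (Gpoly m b).coeff m = 1 := by
  classical
  rw [Gpoly, Polynomial.coeff_add, Polynomial.coeff_X_pow, if_pos rfl,
    Polynomial.finset_sum_coeff]
  have : ∀ i : Fin m, (Polynomial.C (b i) * Polynomial.X ^ (m - 1 - (i : ℕ))).coeff m = 0 := by
    intro i
    rw [Polynomial.coeff_C_mul, Polynomial.coeff_X_pow, if_neg (by omega : ¬ m = m - 1 - (i : ℕ)),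
      mul_zero]
  rw [Finset.sum_congr rfl (fun i _ => this i), Finset.sum_const_zero, add_zero]

lemma Gpoly_degree_le (m : ℕ) (b : Fin m → MvPowerSeries (Fin n) L) :
    (Gpoly m b).degree ≤ (m : WithBot ℕ) := by
  rw [Gpoly]
  apply le_trans (Polynomial.degree_add_le _ _)
  apply max_le (Polynomial.degree_X_pow_le m)
  apply le_trans (Polynomial.degree_sum_le _ _)
  apply Finset.sup_le
  intro i _
  apply le_trans (Polynomial.degree_C_mul_X_pow_le _ _)
  exact_mod_cast Nat.le_of_lt_succ (by omega : m - 1 - (i : ℕ) < m + 1)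

lemma Gpoly_coeff_lt (m : ℕ) (b : Fin m → MvPowerSeries (Fin n) L)
    (hb0 : ∀ i, MvPowerSeries.constantCoeff (σ := Fin n) (R := L) (b i) = 0)
    {j : ℕ} (hj : j < m) :
    MvPowerSeries.constantCoeff (σ := Fin n) (R := L) ((Gpoly m b).coeff j) = 0 := by
  classical
  rw [Gpoly, Polynomial.coeff_add, Polynomial.coeff_X_pow, if_neg (by omega),
    Polynomial.finset_sum_coeff, zero_add, map_sum]
  apply Finset.sum_eq_zero
  intro i _
  rw [Polynomial.coeff_C_mul, Polynomial.coeff_X_pow]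
  by_cases h : j = m - 1 - (i : ℕ)
  · rw [if_pos h, mul_one, hb0]
  · rw [if_neg h, mul_zero, map_zero]

lemma Gpoly_coeff_idx (m : ℕ) (b : Fin m → MvPowerSeries (Fin n) L) (i : Fin m) :
    (Gpoly m b).coeff (m - 1 - (i : ℕ)) = b i := by
  classical
  have him : (i : ℕ) < m := i.isLt
  rw [Gpoly, Polynomial.coeff_add, Polynomial.coeff_X_pow, if_neg (by omega),
    Polynomial.finset_sum_coeff, zero_add]
  rw [Finset.sum_eq_single i]
  · rw [Polynomial.coeff_C_mul, Polynomial.coeff_X_pow, if_pos rfl, mul_one]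
  · intro i' _ hne
    rw [Polynomial.coeff_C_mul, Polynomial.coeff_X_pow, if_neg, mul_zero]
    have : (i' : ℕ) ≠ (i : ℕ) := fun h => hne (Fin.ext h)
    have := i'.isLt
    omega
  · intro h; exact absurd (Finset.mem_univ i) h

lemma Gpoly_monic (m : ℕ) (b : Fin m → MvPowerSeries (Fin n) L) :
    (Gpoly m b).Monic := by
  have h1 : (Gpoly m b).coeff m = 1 := Gpoly_coeff_m m b
  have hdeg : (Gpoly m b).degree = (m : WithBot ℕ) := by
    apply Polynomial.degree_eq_of_le_of_coeff_ne_zero (Gpoly_degree_le m b)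
    rw [h1]; exact one_ne_zero
  rw [Polynomial.Monic, Polynomial.leadingCoeff,
    Polynomial.natDegree_eq_of_degree_eq_some hdeg, h1]


/-- Coefficients of a monic factor (over an algebraically closed field) of a nonzero
polynomial with coefficients in a domain `A` are algebraic over `A`. -/
lemma coeff_factor_isAlgebraic {A : Type*} [CommRing A] [IsDomain A]
    {Ω : Type*} [Field Ω] [IsAlgClosed Ω] (ψ : A →+* Ω) (hψ : Function.Injective ψ)
    (F0 : Polynomial A) (hF0 : F0 ≠ 0) (G Q : Polynomial Ω) (hG : G.Monic)
    (hfact : F0.map ψ = G * Q) (j : ℕ) :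
    ∃ P : Polynomial A, P ≠ 0 ∧ Polynomial.eval₂ ψ (G.coeff j) P = 0 := by
  classical
  letI : Algebra A Ω := ψ.toAlgebra
  set K := FractionRing A
  letI : Algebra K Ω := (IsFractionRing.lift (g := ψ) hψ).toAlgebra
  haveI : IsScalarTower A K Ω :=
    IsScalarTower.of_algebraMap_eq fun x =>
      (show IsFractionRing.lift (g := ψ) hψ (algebraMap A K x) = ψ x from
        IsFractionRing.lift_algebraMap hψ x).symm
  have hsplits : G.Splits := IsAlgClosed.splits G
  have hcard : Multiset.card G.roots = G.natDegree :=
    Polynomial.splits_iff_card_roots.mp hsplits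
  have hprod : G = (G.roots.map fun r => Polynomial.X - Polynomial.C r).prod :=
    hsplits.eq_prod_roots_of_monic hG
  have hrootint : ∀ r ∈ G.roots, IsIntegral K r := by
    intro r hr
    have hroot : G.IsRoot r := (Polynomial.mem_roots'.mp hr).2
    have hFroot : (F0.map ψ).IsRoot r := by
      rw [Polynomial.IsRoot, hfact, Polynomial.eval_mul, hroot, zero_mul]
    have halgA : IsAlgebraic A r := by
      refine ⟨F0, hF0, ?_⟩
      rw [Polynomial.aeval_def, Polynomial.eval₂_eq_eval_map]
      exact hFroot
    exact isAlgebraic_iff_isIntegral.mp ((IsFractionRing.isAlgebraic_iff A K Ω).mp halgA)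
  by_cases hj : j ≤ G.natDegree
  case neg =>
    -- coefficient is zero, trivially algebraic
    have : G.coeff j = 0 := Polynomial.coeff_eq_zero_of_natDegree_lt (by omega)
    refine ⟨Polynomial.X, Polynomial.X_ne_zero, ?_⟩
    rw [Polynomial.eval₂_X, this]
  case pos =>
  have hcoeffT : G.coeff j ∈ integralClosure K Ω := by
    have hle : j ≤ Multiset.card G.roots := by rw [hcard]; exact hj
    have hv := Multiset.prod_X_sub_C_coeff G.roots hle
    rw [← hprod] at hv
    rw [hv]
    apply mul_mem
    · exact pow_mem (neg_mem (one_mem _)) _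
    · rw [Multiset.esymm]
      apply Subalgebra.multiset_sum_mem
      intro x hx
      rw [Multiset.mem_map] at hx
      obtain ⟨t, ht, rfl⟩ := hx
      apply Subalgebra.multiset_prod_mem
      intro y hy
      have hty : t ≤ G.roots := (Multiset.mem_powersetCard.mp ht).1
      exact hrootint y (Multiset.mem_of_le hty hy)
  have halgK : IsAlgebraic K (G.coeff j) := isAlgebraic_iff_isIntegral.mpr hcoeffT
  have halgA : IsAlgebraic A (G.coeff j) := (IsFractionRing.isAlgebraic_iff A K Ω).mpr halgK
  obtain ⟨P, hP0, hPeval⟩ := halgA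
  exact ⟨P, hP0, hPeval⟩


/-- Core of part 1. -/
lemma part1 (m : ℕ) (b : Fin m → MvPowerSeries (Fin n) L)
    (hb0 : ∀ i, MvPowerSeries.constantCoeff (σ := Fin n) (R := L) (b i) = 0)
    (F0 : Polynomial (MvPolynomial (Fin n) L)) (hF0 : F0 ≠ 0)
    (W : PowerSeries (MvPowerSeries (Fin n) L))
    (hEq : ((F0.map (rho L n) : Polynomial (MvPowerSeries (Fin n) L)) :
        PowerSeries (MvPowerSeries (Fin n) L))
      = W * ((Gpoly m b : Polynomial (MvPowerSeries (Fin n) L)) :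
          PowerSeries (MvPowerSeries (Fin n) L)))
    (i : Fin m) :
    ∃ P : Polynomial (MvPolynomial (Fin n) L), P ≠ 0 ∧
      Polynomial.eval₂ (rho L n) (b i) P = 0 := by
  classical
  haveI : IsDomain (MvPowerSeries (Fin n) L) := NoZeroDivisors.to_isDomain _
  have hg : (Gpoly m b).Monic := Gpoly_monic m b
  have hdiv : (F0.map (rho L n)) %ₘ (Gpoly m b)
      + (Gpoly m b) * ((F0.map (rho L n)) /ₘ (Gpoly m b)) = F0.map (rho L n) :=
    Polynomial.modByMonic_add_div _ _
  have hVg : (W - (((F0.map (rho L n)) /ₘ (Gpoly m b) : Polynomial (MvPowerSeries (Fin n) L)) :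
        PowerSeries (MvPowerSeries (Fin n) L))) * ((Gpoly m b :
          Polynomial (MvPowerSeries (Fin n) L)) : PowerSeries (MvPowerSeries (Fin n) L))
      = (((F0.map (rho L n)) %ₘ (Gpoly m b) : Polynomial (MvPowerSeries (Fin n) L)) :
          PowerSeries (MvPowerSeries (Fin n) L)) := by
    have hFfc : ((F0.map (rho L n) : Polynomial (MvPowerSeries (Fin n) L)) :
        PowerSeries (MvPowerSeries (Fin n) L))
        = (((F0.map (rho L n)) %ₘ (Gpoly m b) : Polynomial (MvPowerSeries (Fin n) L)) :
            PowerSeries (MvPowerSeries (Fin n) L))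
          + ((Gpoly m b : Polynomial (MvPowerSeries (Fin n) L)) :
              PowerSeries (MvPowerSeries (Fin n) L))
            * ((((F0.map (rho L n)) /ₘ (Gpoly m b)) : Polynomial (MvPowerSeries (Fin n) L)) :
                PowerSeries (MvPowerSeries (Fin n) L)) := by
      rw [← Polynomial.coe_mul, ← Polynomial.coe_add, hdiv]
    rw [sub_mul, ← hEq, hFfc]
    ring
  have hVzero : W - (((F0.map (rho L n)) /ₘ (Gpoly m b) : Polynomial (MvPowerSeries (Fin n) L)) :
      PowerSeries (MvPowerSeries (Fin n) L)) = 0 := by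
    apply key_lemma (Gpoly m b) (Gpoly_degree_le m b) (Gpoly_coeff_m m b)
      (fun j hj => Gpoly_coeff_lt m b hb0 hj)
    intro k
    rw [hVg, Polynomial.coeff_coe]
    apply Polynomial.coeff_eq_zero_of_degree_lt
    calc ((F0.map (rho L n)) %ₘ (Gpoly m b)).degree < (Gpoly m b).degree :=
          Polynomial.degree_modByMonic_lt _ hg
    _ ≤ (m : WithBot ℕ) := Gpoly_degree_le m b
    _ ≤ ((k + m : ℕ) : WithBot ℕ) := by exact_mod_cast Nat.le_add_left m k
  have hB0 : (F0.map (rho L n)) %ₘ (Gpoly m b) = 0 := by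
    apply (Polynomial.coe_eq_zero_iff).mp
    rw [← hVg, hVzero, zero_mul]
  have hfact : F0.map (rho L n) = (Gpoly m b) * ((F0.map (rho L n)) /ₘ (Gpoly m b)) := by
    conv_lhs => rw [← hdiv]
    rw [hB0, zero_add]
  -- move to the algebraic closure of the fraction field of the power series ring
  have hφinj : Function.Injective ((algebraMap (FractionRing (MvPowerSeries (Fin n) L))
      (AlgebraicClosure (FractionRing (MvPowerSeries (Fin n) L)))).comp
        (algebraMap (MvPowerSeries (Fin n) L) (FractionRing (MvPowerSeries (Fin n) L)))) :=
    by
      rw [RingHom.coe_comp]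
      exact Function.Injective.comp
        (RingHom.injective (algebraMap (FractionRing (MvPowerSeries (Fin n) L))
          (AlgebraicClosure (FractionRing (MvPowerSeries (Fin n) L)))))
        (IsFractionRing.injective (MvPowerSeries (Fin n) L)
          (FractionRing (MvPowerSeries (Fin n) L)))
  set φ := (algebraMap (FractionRing (MvPowerSeries (Fin n) L))
      (AlgebraicClosure (FractionRing (MvPowerSeries (Fin n) L)))).comp
        (algebraMap (MvPowerSeries (Fin n) L) (FractionRing (MvPowerSeries (Fin n) L))) with hφdef
  have hρinj : Function.Injective (rho L n) := MvPolynomial.coe_injective _ _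
  have hfactΩ : F0.map (φ.comp (rho L n)) = ((Gpoly m b).map φ)
      * (((F0.map (rho L n)) /ₘ (Gpoly m b)).map φ) := by
    rw [← Polynomial.map_map]
    conv_lhs => rw [hfact]
    rw [Polynomial.map_mul]
  obtain ⟨P, hP0, hPeval⟩ := coeff_factor_isAlgebraic (φ.comp (rho L n)) (hφinj.comp hρinj)
    F0 hF0 _ _ (hg.map φ) hfactΩ (m - 1 - (i : ℕ))
  refine ⟨P, hP0, ?_⟩
  apply hφinj
  rw [map_zero, Polynomial.hom_eval₂]
  have : ((Gpoly m b).map φ).coeff (m - 1 - (i : ℕ)) = φ (b i) := by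
    rw [Polynomial.coeff_map, Gpoly_coeff_idx m b i]
  rw [← this]
  exact hPeval


lemma algebraMap_mvPoly_eq_coe {σ : Type*} (p : MvPolynomial σ L) :
    algebraMap (MvPolynomial σ L) (MvPowerSeries σ L) p = (p : MvPowerSeries σ L) := by
  show MvPowerSeries.map (σ := σ) (algebraMap L L) (p : MvPowerSeries σ L) = (p : MvPowerSeries σ L)
  apply MvPowerSeries.ext; intro d
  rw [MvPowerSeries.coeff_map]
  simp

/-- Generic part 2: if `Fv = u * G` in a field, with `Fv` a nonzero element of the image of `A`,
and `G` built from algebraic elements, then `u` is algebraic over `A`. -/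
lemma u_isAlgebraic {A Ω : Type*} [CommRing A] [IsDomain A] [Field Ω]
    (ψ : A →+* Ω) (hψ : Function.Injective ψ)
    (m : ℕ) (u x Fv : Ω) (fs : Fin m → Ω)
    (hx : ∃ p : A, ψ p = x) (hF : ∃ p : A, ψ p = Fv)
    (hfs : ∀ i, ∃ P : Polynomial A, P ≠ 0 ∧ Polynomial.eval₂ ψ (fs i) P = 0)
    (hFne : Fv ≠ 0)
    (heq : Fv = u * (x ^ m + ∑ i : Fin m, fs i * x ^ (m - 1 - (i : ℕ)))) :
    ∃ P : Polynomial A, P ≠ 0 ∧ Polynomial.eval₂ ψ u P = 0 := by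
  classical
  letI : Algebra A Ω := ψ.toAlgebra
  set K := FractionRing A
  letI : Algebra K Ω := (IsFractionRing.lift (g := ψ) hψ).toAlgebra
  haveI : IsScalarTower A K Ω :=
    IsScalarTower.of_algebraMap_eq fun y =>
      (show IsFractionRing.lift (g := ψ) hψ (algebraMap A K y) = ψ y from
        IsFractionRing.lift_algebraMap hψ y).symm
  have hIsInt : ∀ z : Ω, IsAlgebraic A z → IsIntegral K z := fun z hz =>
    isAlgebraic_iff_isIntegral.mp ((IsFractionRing.isAlgebraic_iff A K Ω).mp hz)
  have himg : ∀ (p : A), IsIntegral K (ψ p) := by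
    intro p
    apply hIsInt
    refine ⟨Polynomial.X - Polynomial.C p, Polynomial.X_sub_C_ne_zero _, ?_⟩
    rw [map_sub, Polynomial.aeval_X, Polynomial.aeval_C]
    show ψ p - ψ p = 0
    rw [sub_self]
  obtain ⟨px, rfl⟩ := hx
  obtain ⟨pF, rfl⟩ := hF
  have hxint : IsIntegral K (ψ px) := himg px
  have hFint : IsIntegral K (ψ pF) := himg pF
  have hfsint : ∀ i, IsIntegral K (fs i) := by
    intro i
    apply hIsInt
    obtain ⟨P, hP0, hPev⟩ := hfs i
    exact ⟨P, hP0, by rw [Polynomial.aeval_def]; exact hPev⟩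
  have hGint : IsIntegral K ((ψ px) ^ m + ∑ i : Fin m, fs i * (ψ px) ^ (m - 1 - (i : ℕ))) := by
    apply IsIntegral.add
    · exact hxint.pow m
    · exact IsIntegral.sum _ (fun i _ => (hfsint i).mul (hxint.pow _))
  have hGne : ((ψ px) ^ m + ∑ i : Fin m, fs i * (ψ px) ^ (m - 1 - (i : ℕ))) ≠ 0 := by
    intro h
    rw [h, mul_zero] at heq
    exact hFne heq
  have hu : u = (ψ pF) * ((ψ px) ^ m + ∑ i : Fin m, fs i * (ψ px) ^ (m - 1 - (i : ℕ)))⁻¹ := by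
    rw [heq]
    field_simp
  have huint : IsIntegral K u := by
    rw [hu]
    exact hFint.mul hGint.inv
  have halgU : IsAlgebraic A u :=
    (IsFractionRing.isAlgebraic_iff A K Ω).mpr (isAlgebraic_iff_isIntegral.mpr huint)
  obtain ⟨P, hP0, hPev⟩ := halgU
  exact ⟨P, hP0, by rw [Polynomial.aeval_def] at hPev; exact hPev⟩

/-- Part 2 : the unit `U` is algebraic over the polynomial ring, given that the
Weierstrass coefficients are. -/
lemma part2 (F : MvPolynomial (Fin (n + 1)) L)
    (hFne : (F : MvPowerSeries (Fin (n + 1)) L) ≠ 0)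
    (m : ℕ) (U : MvPowerSeries (Fin (n + 1)) L)
    (a : Fin m → MvPowerSeries (Fin (n + 1)) L)
    (halg : ∀ i, ∃ P : Polynomial (MvPolynomial (Fin (n + 1)) L), P ≠ 0 ∧
      Polynomial.aeval (a i) P = 0)
    (hFUG : (F : MvPowerSeries (Fin (n + 1)) L) =
      U * ((MvPowerSeries.X (Fin.last n)) ^ m +
        ∑ i : Fin m, a i * (MvPowerSeries.X (Fin.last n)) ^ (m - 1 - (i : ℕ)))) :
    ∃ P : Polynomial (MvPolynomial (Fin (n + 1)) L), P ≠ 0 ∧ Polynomial.aeval U P = 0 := by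
  classical
  haveI : IsDomain (MvPowerSeries (Fin (n + 1)) L) := NoZeroDivisors.to_isDomain _
  set j : MvPowerSeries (Fin (n + 1)) L →+*
      AlgebraicClosure (FractionRing (MvPowerSeries (Fin (n + 1)) L)) :=
    (algebraMap (FractionRing (MvPowerSeries (Fin (n + 1)) L))
      (AlgebraicClosure (FractionRing (MvPowerSeries (Fin (n + 1)) L)))).comp
      (algebraMap (MvPowerSeries (Fin (n + 1)) L)
        (FractionRing (MvPowerSeries (Fin (n + 1)) L))) with hjdef
  have hjinj : Function.Injective j := by
    rw [hjdef, RingHom.coe_comp]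
    exact Function.Injective.comp (RingHom.injective _)
      (IsFractionRing.injective (MvPowerSeries (Fin (n + 1)) L) _)
  have hASinj : Function.Injective
      (algebraMap (MvPolynomial (Fin (n + 1)) L) (MvPowerSeries (Fin (n + 1)) L)) := by
    intro p q h
    rw [algebraMap_mvPoly_eq_coe, algebraMap_mvPoly_eq_coe] at h
    exact MvPolynomial.coe_injective _ _ h
  have haev : ∀ (x : MvPowerSeries (Fin (n + 1)) L)
      (P : Polynomial (MvPolynomial (Fin (n + 1)) L)),
      j (Polynomial.aeval x P) = Polynomial.eval₂
        (j.comp (algebraMap (MvPolynomial (Fin (n + 1)) L) (MvPowerSeries (Fin (n + 1)) L)))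
        (j x) P := by
    intro x P
    rw [Polynomial.aeval_def, Polynomial.hom_eval₂]
  obtain ⟨P, hP0, hPev⟩ := u_isAlgebraic
    (j.comp (algebraMap (MvPolynomial (Fin (n + 1)) L) (MvPowerSeries (Fin (n + 1)) L)))
    (by rw [RingHom.coe_comp]; exact hjinj.comp hASinj)
    m (j U) (j (MvPowerSeries.X (Fin.last n))) (j (F : MvPowerSeries (Fin (n + 1)) L))
    (fun i => j (a i))
    ⟨MvPolynomial.X (Fin.last n), by
      rw [RingHom.comp_apply, algebraMap_mvPoly_eq_coe, MvPolynomial.coe_X]⟩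
    ⟨F, by rw [RingHom.comp_apply, algebraMap_mvPoly_eq_coe]⟩
    (fun i => by
      obtain ⟨P, hP0, hPev⟩ := halg i
      exact ⟨P, hP0, by rw [← haev, hPev, map_zero]⟩)
    (fun h => hFne (hjinj (by rw [h, map_zero])))
    (by
      have hs : ∀ i : Fin m, (fun i => j (a i)) i
            * (j (MvPowerSeries.X (Fin.last n))) ^ (m - 1 - (i : ℕ))
          = j (a i * (MvPowerSeries.X (Fin.last n)) ^ (m - 1 - (i : ℕ))) := by
        intro i
        rw [map_mul, map_pow]
      rw [Finset.sum_congr rfl (fun i _ => hs i), ← map_sum, ← map_pow, ← map_add, ← map_mul,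
        ← hFUG])
  refine ⟨P, hP0, ?_⟩
  apply hjinj
  rw [map_zero, haev]
  exact hPev

end WDA

open WDA in
/-- Lemma 3.2 (definability of Weierstrass data): let `F ∈ L[x₁,…,x_{n+1}]` be regular in
the last variable, and suppose `F = U·G` in `L[[x₁,…,x_{n+1}]]` with `U` a unit and
`G = xₙ₊₁^m + a₁·xₙ₊₁^{m-1} + ⋯ + a_m` a Weierstrass polynomial whose coefficients `aᵢ`
are power series in the first `n` variables with zero constant coefficient.  Then each
`aᵢ` is algebraic over `L[x₁,…,xₙ]` and `U` is algebraic over `L[x₁,…,x_{n+1}]`. -/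
theorem weierstrass_data_algebraic (L : Type) [Field L] (n : ℕ)
    (F : MvPolynomial (Fin (n + 1)) L)
    (hreg : (aeval (fun i : Fin (n + 1) =>
      if i = Fin.last n then (Polynomial.X : Polynomial L) else 0) F) ≠ 0)
    (m : ℕ) (U : MvPowerSeries (Fin (n + 1)) L) (hU : IsUnit U)
    (a : Fin m → MvPowerSeries (Fin (n + 1)) L)
    (ha : ∀ i, ∀ d : Fin (n + 1) →₀ ℕ, d (Fin.last n) ≠ 0 →
      MvPowerSeries.coeff d (a i) = 0)
    (ha0 : ∀ i, MvPowerSeries.constantCoeff (a i) = 0)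
    (hFUG : (F : MvPowerSeries (Fin (n + 1)) L) =
      U * ((MvPowerSeries.X (Fin.last n)) ^ m +
        ∑ i : Fin m, a i * (MvPowerSeries.X (Fin.last n)) ^ (m - 1 - (i : ℕ)))) :
    (∀ i, ∃ P : Polynomial (MvPolynomial (Fin n) L),
        P ≠ 0 ∧ Polynomial.eval₂ (polyToBigPS L n) (a i) P = 0) ∧
    (∃ P : Polynomial (MvPolynomial (Fin (n + 1)) L), P ≠ 0 ∧ Polynomial.aeval U P = 0) := by
  classical
  have hF : F ≠ 0 := by
    intro h
    exact hreg (by rw [h, map_zero])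
  have hFne : (F : MvPowerSeries (Fin (n + 1)) L) ≠ 0 := by
    rw [Ne, MvPolynomial.coe_eq_zero_iff]
    exact hF
  -- transport the factorization through `psi`
  have hpsiF : psi L n (F : MvPowerSeries (Fin (n + 1)) L)
      = (((theta0 L n F).map (rho L n) : Polynomial (MvPowerSeries (Fin n) L)) :
          PowerSeries (MvPowerSeries (Fin n) L)) := by
    have h := RingHom.congr_fun (psi_comp_coe (L := L) (n := n)) F
    simpa only [RingHom.comp_apply, MvPolynomial.coeToMvPowerSeries.ringHom_apply,
      Polynomial.coeToPowerSeries.ringHom_apply, Polynomial.coe_mapRingHom] using h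
  have hpsia : ∀ i, psi L n (a i)
      = PowerSeries.C (R := MvPowerSeries (Fin n) L) (ares (a i)) :=
    fun i => psi_eq_C_ares (a i) (ha i)
  have hpsiG : psi L n ((MvPowerSeries.X (Fin.last n)) ^ m +
        ∑ i : Fin m, a i * (MvPowerSeries.X (Fin.last n)) ^ (m - 1 - (i : ℕ)))
      = ((Gpoly m (fun i => ares (a i)) : Polynomial (MvPowerSeries (Fin n) L)) :
          PowerSeries (MvPowerSeries (Fin n) L)) := by
    rw [map_add, map_pow, psi_X_last, map_sum, Gpoly,
      ← Polynomial.coeToPowerSeries.ringHom_apply, map_add, map_pow, map_sum]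
    simp only [map_mul, map_pow, psi_X_last, Polynomial.coeToPowerSeries.ringHom_apply,
      Polynomial.coe_X, Polynomial.coe_C, Polynomial.coe_pow, hpsia]
  have hF0 : theta0 L n F ≠ 0 := by
    intro h0
    apply hFne
    apply psi_injective (L := L) (n := n)
    rw [hpsiF, h0, Polynomial.map_zero, map_zero, Polynomial.coe_zero]
  have hEq : (((theta0 L n F).map (rho L n) : Polynomial (MvPowerSeries (Fin n) L)) :
        PowerSeries (MvPowerSeries (Fin n) L))
      = psi L n U * ((Gpoly m (fun i => ares (a i)) :
          Polynomial (MvPowerSeries (Fin n) L)) : PowerSeries (MvPowerSeries (Fin n) L)) := by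
    rw [← hpsiF, ← hpsiG, ← map_mul, ← hFUG]
  have hpart1 : ∀ i, ∃ P : Polynomial (MvPolynomial (Fin n) L),
      P ≠ 0 ∧ Polynomial.eval₂ (polyToBigPS L n) (a i) P = 0 := by
    intro i
    obtain ⟨P, hP0, hPev⟩ := part1 m (fun i => ares (a i))
      (fun i => constantCoeff_ares (a i) (ha0 i)) (theta0 L n F) hF0 (psi L n U) hEq i
    refine ⟨P, hP0, ?_⟩
    apply psi_injective (L := L) (n := n)
    rw [map_zero, Polynomial.hom_eval₂, psi_comp_polyToBigPS, hpsia i,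
      ← Polynomial.hom_eval₂, hPev, map_zero]
  refine ⟨hpart1, ?_⟩
  -- part 2
  have halg : ∀ i, ∃ P : Polynomial (MvPolynomial (Fin (n + 1)) L), P ≠ 0 ∧
      Polynomial.aeval (a i) P = 0 := by
    intro i
    obtain ⟨P, hP0, hPev⟩ := hpart1 i
    refine ⟨P.map (MvPolynomial.rename (Fin.castSucc : Fin n → Fin (n + 1))).toRingHom, ?_, ?_⟩
    · intro h
      apply hP0
      apply Polynomial.map_injective _
        (MvPolynomial.rename_injective _ (Fin.castSucc_injective n))
      rw [h, Polynomial.map_zero]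
    · rw [Polynomial.aeval_def, Polynomial.eval₂_map]
      have hcomp : (algebraMap (MvPolynomial (Fin (n + 1)) L)
            (MvPowerSeries (Fin (n + 1)) L)).comp
            (MvPolynomial.rename (Fin.castSucc : Fin n → Fin (n + 1))).toRingHom
          = polyToBigPS L n := by
        apply RingHom.ext
        intro q
        rw [RingHom.comp_apply, AlgHom.toRingHom_eq_coe, RingHom.coe_coe,
          algebraMap_mvPoly_eq_coe, polyToBigPS, RingHom.comp_apply,
          AlgHom.toRingHom_eq_coe, RingHom.coe_coe,
          MvPolynomial.coeToMvPowerSeries.ringHom_apply]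
      rw [hcomp]
      exact hPev
  exact part2 F hFne m U a halg hFUG
end

section
/- Let L be an algebraically closed field and K an algebraically closed field extension of L. Let d ≥ 1 and let (u_α) be a family of elements of K, indexed by the monomials α of degree d in X, Y, Z, which is algebraically independent over L, and set s = ∑_α u_α·α ∈ K[X,Y,Z]. Then the projective plane curve s = 0 is nonsingular: for every nonzero point p ∈ K³ with s(p) = 0, the gradient vector (∂s/∂X(p), ∂s/∂Y(p), ∂s/∂Z(p)) is nonzero. -/
open MvPolynomial


section Helpers

lemma finsupp_degree_single {σ : Type*} (a : σ) (n : ℕ) :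
    (Finsupp.single a n).degree = n := by
  rcases eq_or_ne n 0 with h | h
  · simp [h]
  · rw [Finsupp.degree_apply, Finsupp.support_single_ne_zero _ h, Finset.sum_singleton,
      Finsupp.single_eq_same]

lemma finsupp_degree_add {σ : Type*} (f g : σ →₀ ℕ) :
    (f + g).degree = f.degree + g.degree := by
  classical
  simp only [Finsupp.degree_eq_weight_one, map_add]

lemma deg3 (α : Fin 3 →₀ ℕ) : α.degree = α 0 + α 1 + α 2 := by
  rw [Finsupp.degree_apply,
    Finset.sum_subset (Finset.subset_univ _) fun i _ hi => Finsupp.notMem_support_iff.mp hi]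
  exact Fin.sum_univ_three α

lemma sub_single_add {σ : Type*} [DecidableEq σ] (α : σ →₀ ℕ) (i : σ) (h : α i ≠ 0) :
    (α - Finsupp.single i 1) + Finsupp.single i 1 = α := by
  ext k
  simp only [Finsupp.add_apply, Finsupp.tsub_apply, Finsupp.single_apply]
  split_ifs with hk
  · subst hk; omega
  · omega

end Helpers

section Aux

theorem eval_eq_sum_support {σ R : Type*} [CommSemiring R] (f : σ → R) (p : MvPolynomial σ R) :
    eval f p = ∑ α ∈ p.support, p.coeff α * α.prod fun k e => f k ^ e := by
  conv_lhs => rw [← support_sum_monomial_coeff p]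
  rw [map_sum]
  exact Finset.sum_congr rfl fun α _ => eval_monomial

theorem eval_pderiv_eq_sum_support {σ R : Type*} [CommSemiring R] (f : σ → R)
    (p : MvPolynomial σ R) (i : σ) :
    eval f (pderiv i p) = ∑ α ∈ p.support,
      p.coeff α * (α i) * (α - Finsupp.single i 1).prod fun k e => f k ^ e := by
  conv_lhs => rw [← support_sum_monomial_coeff p]
  rw [map_sum, map_sum]
  refine Finset.sum_congr rfl fun α _ => ?_
  rw [pderiv_monomial, eval_monomial]

theorem finsupp_prod_smul {σ K : Type*} [CommRing K] (c : K) (f : σ → K) (β : σ →₀ ℕ) :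
    (β.prod fun k e => (c * f k) ^ e) = c ^ β.degree * β.prod fun k e => f k ^ e := by
  rw [Finsupp.prod, Finsupp.prod, Finsupp.degree_apply, ← Finset.prod_pow_eq_pow_sum,
    ← Finset.prod_mul_distrib]
  exact Finset.prod_congr rfl fun k _ => mul_pow _ _ _

theorem eval_scale {K : Type*} [CommRing K] {σ : Type*} {d : ℕ} {s : MvPolynomial σ K}
    (hshom : s.IsHomogeneous d) (c : K) (p : σ → K) :
    eval (fun k => c * p k) s = c ^ d * eval p s := by
  rw [eval_eq_sum_support, eval_eq_sum_support, Finset.mul_sum]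
  refine Finset.sum_congr rfl fun α hα => ?_
  rw [finsupp_prod_smul]
  have hdeg : α.degree = d := by
    rw [Finsupp.degree_eq_weight_one]; exact hshom (mem_support_iff.mp hα)
  rw [hdeg]; ring

theorem eval_scale_pderiv {K : Type*} [CommRing K] {σ : Type*} [DecidableEq σ] {d : ℕ}
    {s : MvPolynomial σ K} (hshom : s.IsHomogeneous d) (c : K) (p : σ → K) (i : σ) :
    eval (fun k => c * p k) (pderiv i s) = c ^ (d - 1) * eval p (pderiv i s) := by
  rw [eval_pderiv_eq_sum_support, eval_pderiv_eq_sum_support, Finset.mul_sum]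
  refine Finset.sum_congr rfl fun α hα => ?_
  rcases eq_or_ne (α i) 0 with h | h
  · simp [h]
  · rw [finsupp_prod_smul]
    have hdeg : α.degree = d := by
      rw [Finsupp.degree_eq_weight_one]; exact hshom (mem_support_iff.mp hα)
    have hsub : (α - Finsupp.single i 1).degree = d - 1 := by
      have h2 := congrArg Finsupp.degree (sub_single_add α i h)
      rw [finsupp_degree_add, finsupp_degree_single, hdeg] at h2
      omega
    rw [hsub]; ring

end Aux


variable {L K : Type*} [Field L] [CommRing K] [Algebra L K]

theorem aeval_mem_span_of_totalDegree_le {κ : Type*} [Fintype κ] (w : κ → K) (M : ℕ)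
    (r : MvPolynomial κ L) (hr : r.totalDegree ≤ M) :
    aeval w r ∈ Submodule.span L
      (Set.range fun g : κ → Fin (M + 1) => ∏ k, w k ^ (g k : ℕ)) := by
  have hsum : aeval w r = ∑ g ∈ r.support, aeval w (monomial g (r.coeff g)) := by
    conv_lhs => rw [← support_sum_monomial_coeff r]
    rw [map_sum]
  rw [hsum]
  refine Submodule.sum_mem _ fun g hg => ?_
  have hgk : ∀ k, g k < M + 1 := fun k =>
    Nat.lt_succ_of_le <| le_trans (Finsupp.le_degree k g) (le_trans (le_totalDegree hg) hr)
  rw [aeval_monomial, ← Algebra.smul_def]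
  refine Submodule.smul_mem _ _ (Submodule.subset_span ⟨fun k => ⟨g k, hgk k⟩, ?_⟩)
  rw [Finsupp.prod_fintype _ _ fun k => pow_zero _]

theorem not_algebraicIndependent_of_card_lt {ι κ : Type*} [Fintype ι] [Fintype κ]
    (hcard : Fintype.card κ < Fintype.card ι) (u : ι → K) (w : κ → K)
    (hu : ∀ i, u i ∈ Algebra.adjoin L (Set.range w)) :
    ¬ AlgebraicIndependent L u := by
  classical
  intro hind
  have hq : ∀ i, ∃ q : MvPolynomial κ L, aeval w q = u i := by
    intro i
    have h := hu i
    rw [Algebra.adjoin_range_eq_range_aeval] at h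
    exact h
  choose q hq using hq
  set n := Fintype.card ι with hn
  set m := Fintype.card κ with hm
  set D := Finset.univ.sup fun i => (q i).totalDegree with hD
  set C := D * n + 1 with hC
  set t := C ^ m with ht
  set M := D * n * t with hM
  -- linear independence of the u-monomials
  have hinj : Function.Injective (aeval u : MvPolynomial ι L →ₐ[L] K) :=
    algebraicIndependent_iff_injective_aeval.mp hind
  have hφinj : Function.Injective
      (fun e : ι → Fin (t + 1) => Finsupp.equivFunOnFinite.symm fun i => (e i : ℕ)) := by
    intro a b hab
    have h2 : (fun i => (a i : ℕ)) = fun i => (b i : ℕ) :=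
      Finsupp.equivFunOnFinite.symm.injective hab
    funext i
    exact Fin.val_injective (congrFun h2 i)
  have hF : LinearIndependent L fun e : ι → Fin (t + 1) => ∏ i, u i ^ (e i : ℕ) := by
    have hb := ((MvPolynomial.basisMonomials ι L).linearIndependent.map'
        (aeval u).toLinearMap (LinearMap.ker_eq_bot.mpr hinj)).comp _ hφinj
    have heq : (fun e : ι → Fin (t + 1) => ∏ i, u i ^ (e i : ℕ)) =
        ((⇑(aeval u).toLinearMap ∘ ⇑(MvPolynomial.basisMonomials ι L)) ∘
          fun e : ι → Fin (t + 1) => Finsupp.equivFunOnFinite.symm fun i => (e i : ℕ)) := by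
      funext e
      simp only [Function.comp_apply, coe_basisMonomials, AlgHom.toLinearMap_apply, aeval_monomial,
        map_one, one_mul]
      rw [Finsupp.prod_fintype _ _ fun k => pow_zero _]
      simp
    rw [heq]
    exact hb
  -- membership in a small span
  have hmem : ∀ e : ι → Fin (t + 1), (∏ i, u i ^ (e i : ℕ)) ∈ Submodule.span L
      (Set.range fun g : κ → Fin (M + 1) => ∏ k, w k ^ (g k : ℕ)) := by
    intro e
    have hEq : (∏ i, u i ^ (e i : ℕ)) = aeval w (∏ i, q i ^ (e i : ℕ)) := by
      rw [map_prod]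
      exact Finset.prod_congr rfl fun i _ => by rw [map_pow, hq]
    rw [hEq]
    apply aeval_mem_span_of_totalDegree_le
    calc (∏ i, q i ^ (e i : ℕ)).totalDegree
        ≤ ∑ i, (q i ^ (e i : ℕ)).totalDegree := totalDegree_finset_prod _ _
      _ ≤ ∑ _i : ι, t * D := by
          refine Finset.sum_le_sum fun i _ => ?_
          refine le_trans (totalDegree_pow _ _) ?_
          exact Nat.mul_le_mul (Fin.is_le _) (Finset.le_sup (f := fun i => (q i).totalDegree) (Finset.mem_univ i))
      _ = n * (t * D) := by rw [Finset.sum_const, Finset.card_univ, smul_eq_mul]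
      _ = M := by rw [hM]; ring
  set V := Submodule.span L
      (Set.range fun g : κ → Fin (M + 1) => ∏ k, w k ^ (g k : ℕ)) with hV
  haveI : Module.Finite L V := FiniteDimensional.span_of_finite L (Set.finite_range _)
  have hle : Fintype.card (ι → Fin (t + 1)) ≤ Module.finrank L V := by
    have hFi : LinearIndependent L fun e : ι → Fin (t + 1) => (⟨_, hmem e⟩ : V) :=
      LinearIndependent.of_comp V.subtype hF
    exact hFi.fintype_card_le_finrank
  have hfr : Module.finrank L V ≤ Fintype.card (κ → Fin (M + 1)) := by
    refine le_trans (finrank_span_le_card _) ?_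
    rw [Set.toFinset_range]
    exact le_trans (Finset.card_image_le) (by simp)
  have hcards : (t + 1) ^ n ≤ (M + 1) ^ m := by
    have := le_trans hle hfr
    simpa [Fintype.card_fun] using this
  -- arithmetic contradiction
  have h1 : M + 1 ≤ C * (t + 1) := by
    have : C * (t + 1) = D * n * t + t + D * n + 1 := by rw [hC]; ring
    omega
  have h2 : (M + 1) ^ m ≤ (C * (t + 1)) ^ m := Nat.pow_le_pow_left h1 m
  have h3 : (C * (t + 1)) ^ m = t * (t + 1) ^ m := by rw [mul_pow, ← ht]
  have h4 : t * (t + 1) ^ m < (t + 1) ^ (m + 1) := by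
    rw [pow_succ, mul_comm t]
    exact (Nat.mul_lt_mul_left (Nat.pow_pos (Nat.succ_pos t))).mpr (Nat.lt_succ_self t)
  have h5 : (t + 1) ^ (m + 1) ≤ (t + 1) ^ n :=
    Nat.pow_le_pow_right (Nat.succ_le_succ (Nat.zero_le t)) hcard
  omega

theorem key_lemma (L K : Type) [Field L] [Field K] [Algebra L K] (d : ℕ) (hd : 1 ≤ d)
    (s : MvPolynomial (Fin 3) K) (hshom : s.IsHomogeneous d)
    (hgen : AlgebraicIndependent L
      (fun α : {α : Fin 3 →₀ ℕ // α 0 + α 1 + α 2 = d} => s.coeff (α : Fin 3 →₀ ℕ)))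
    (p : Fin 3 → K) (j j1 j2 : Fin 3)
    (hcov : ∀ k : Fin 3, k = j ∨ k = j1 ∨ k = j2)
    (hjj1 : j ≠ j1) (hjj2 : j ≠ j2) (hj12 : j1 ≠ j2)
    (hpj : p j = 1) (h0 : eval p s = 0)
    (h1 : eval p (pderiv j1 s) = 0) (h2 : eval p (pderiv j2 s) = 0) : False := by
  classical
  set ι := {α : Fin 3 →₀ ℕ // α 0 + α 1 + α 2 = d} with hι
  set μ0 : Fin 3 →₀ ℕ := Finsupp.single j d with hμ0
  set μ1 : Fin 3 →₀ ℕ := Finsupp.single j (d - 1) + Finsupp.single j1 1 with hμ1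
  set μ2 : Fin 3 →₀ ℕ := Finsupp.single j (d - 1) + Finsupp.single j2 1 with hμ2
  -- degrees
  have hdegμ0 : μ0 0 + μ0 1 + μ0 2 = d := by
    rw [← deg3, hμ0, finsupp_degree_single]
  have hdegμ1 : μ1 0 + μ1 1 + μ1 2 = d := by
    rw [← deg3, hμ1, finsupp_degree_add, finsupp_degree_single, finsupp_degree_single]; omega
  have hdegμ2 : μ2 0 + μ2 1 + μ2 2 = d := by
    rw [← deg3, hμ2, finsupp_degree_add, finsupp_degree_single, finsupp_degree_single]; omega
  -- coordinate values
  have hμ0j1 : μ0 j1 = 0 := Finsupp.single_eq_of_ne' hjj1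
  have hμ0j2 : μ0 j2 = 0 := Finsupp.single_eq_of_ne' hjj2
  have hμ1j1 : μ1 j1 = 1 := by
    rw [hμ1, Finsupp.add_apply, Finsupp.single_eq_of_ne' hjj1, Finsupp.single_eq_same]
  have hμ1j2 : μ1 j2 = 0 := by
    rw [hμ1, Finsupp.add_apply, Finsupp.single_eq_of_ne' hjj2, Finsupp.single_eq_of_ne' hj12]
    rfl
  have hμ2j1 : μ2 j1 = 0 := by
    rw [hμ2, Finsupp.add_apply, Finsupp.single_eq_of_ne' hjj1,
      Finsupp.single_eq_of_ne' (Ne.symm hj12)]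
    rfl
  have hμ2j2 : μ2 j2 = 1 := by
    rw [hμ2, Finsupp.add_apply, Finsupp.single_eq_of_ne' hjj2, Finsupp.single_eq_same]
  -- distinctness
  have hμ01 : μ0 ≠ μ1 := fun h => by rw [h] at hμ0j1; omega
  have hμ02 : μ0 ≠ μ2 := fun h => by rw [h] at hμ0j2; omega
  have hμ12 : μ1 ≠ μ2 := fun h => by rw [h] at hμ1j1; omega
  -- support characterization
  have hne : ∀ (α : Fin 3 →₀ ℕ), α 0 + α 1 + α 2 = d → s.coeff α ≠ 0 := fun α hα =>
    hgen.ne_zero (⟨α, hα⟩ : ι)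
  have hdeg : ∀ α ∈ s.support, α 0 + α 1 + α 2 = d := fun α hα => by
    rw [← deg3, Finsupp.degree_eq_weight_one]
    exact hshom (mem_support_iff.mp hα)
  have hμ0mem : μ0 ∈ s.support := mem_support_iff.mpr (hne _ hdegμ0)
  have hμ1mem : μ1 ∈ s.support := mem_support_iff.mpr (hne _ hdegμ1)
  have hμ2mem : μ2 ∈ s.support := mem_support_iff.mpr (hne _ hdegμ2)
  -- generators
  set Sub := {α : ι // (α : Fin 3 →₀ ℕ) ≠ μ0 ∧ (α : Fin 3 →₀ ℕ) ≠ μ1 ∧ (α : Fin 3 →₀ ℕ) ≠ μ2}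
    with hSub
  set w : Sub ⊕ Fin 2 → K := Sum.elim (fun β => s.coeff (β.1 : Fin 3 →₀ ℕ)) ![p j1, p j2] with hw
  set A := Algebra.adjoin L (Set.range w) with hA
  have hpj1A : p j1 ∈ A := Algebra.subset_adjoin ⟨Sum.inr 0, rfl⟩
  have hpj2A : p j2 ∈ A := Algebra.subset_adjoin ⟨Sum.inr 1, rfl⟩
  have hSubA : ∀ (α : Fin 3 →₀ ℕ) (hα : α 0 + α 1 + α 2 = d),
      α ≠ μ0 → α ≠ μ1 → α ≠ μ2 → s.coeff α ∈ A := fun α hα n0 n1 n2 =>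
    Algebra.subset_adjoin ⟨Sum.inl ⟨⟨α, hα⟩, n0, n1, n2⟩, rfl⟩
  -- monomial products of p lie in A
  have hP : ∀ β : Fin 3 →₀ ℕ, (β.prod fun k e => p k ^ e) ∈ A := by
    intro β
    refine Subalgebra.prod_mem A fun k _ => ?_
    show p k ^ β k ∈ A
    rcases hcov k with hk | hk | hk
    · subst hk; rw [hpj, one_pow]; exact Subalgebra.one_mem A
    · subst hk; exact Subalgebra.pow_mem A hpj1A _
    · subst hk; exact Subalgebra.pow_mem A hpj2A _
  have hPsingle : ∀ n : ℕ, ((Finsupp.single j n).prod fun k e => p k ^ e) = 1 := by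
    intro n
    simp [Finsupp.prod_single_index, hpj]
  -- the three relations
  have hsub1 : μ1 - Finsupp.single j1 1 = Finsupp.single j (d - 1) := by
    rw [hμ1, add_tsub_cancel_right]
  have hsub2 : μ2 - Finsupp.single j2 1 = Finsupp.single j (d - 1) := by
    rw [hμ2, add_tsub_cancel_right]
  have hu1 : s.coeff μ1 ∈ A := by
    have hrel := h1
    rw [eval_pderiv_eq_sum_support, ← Finset.add_sum_erase _ _ hμ1mem] at hrel
    rw [hμ1j1, hsub1, hPsingle, Nat.cast_one, mul_one, mul_one] at hrel
    have : s.coeff μ1 = -∑ α ∈ s.support.erase μ1,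
        s.coeff α * (α j1) * ((α - Finsupp.single j1 1).prod fun k e => p k ^ e) :=
      eq_neg_of_add_eq_zero_left hrel
    rw [this]
    refine Subalgebra.neg_mem A (Subalgebra.sum_mem A fun α hα => ?_)
    have hαs : α ∈ s.support := Finset.mem_of_mem_erase hα
    have hαμ1 : α ≠ μ1 := Finset.ne_of_mem_erase hα
    rcases eq_or_ne α μ0 with h' | h'
    · subst h'; rw [hμ0j1]; simpa using Subalgebra.zero_mem A
    rcases eq_or_ne α μ2 with h'' | h''
    · subst h''; rw [hμ2j1]; simpa using Subalgebra.zero_mem A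
    exact Subalgebra.mul_mem A
      (Subalgebra.mul_mem A (hSubA α (hdeg α hαs) h' hαμ1 h'')
        (Subalgebra.natCast_mem A _)) (hP _)
  have hu2 : s.coeff μ2 ∈ A := by
    have hrel := h2
    rw [eval_pderiv_eq_sum_support, ← Finset.add_sum_erase _ _ hμ2mem] at hrel
    rw [hμ2j2, hsub2, hPsingle, Nat.cast_one, mul_one, mul_one] at hrel
    have : s.coeff μ2 = -∑ α ∈ s.support.erase μ2,
        s.coeff α * (α j2) * ((α - Finsupp.single j2 1).prod fun k e => p k ^ e) :=
      eq_neg_of_add_eq_zero_left hrel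
    rw [this]
    refine Subalgebra.neg_mem A (Subalgebra.sum_mem A fun α hα => ?_)
    have hαs : α ∈ s.support := Finset.mem_of_mem_erase hα
    have hαμ2 : α ≠ μ2 := Finset.ne_of_mem_erase hα
    rcases eq_or_ne α μ0 with h' | h'
    · subst h'; rw [hμ0j2]; simpa using Subalgebra.zero_mem A
    rcases eq_or_ne α μ1 with h'' | h''
    · subst h''; rw [hμ1j2]; simpa using Subalgebra.zero_mem A
    exact Subalgebra.mul_mem A
      (Subalgebra.mul_mem A (hSubA α (hdeg α hαs) h' h'' hαμ2)
        (Subalgebra.natCast_mem A _)) (hP _)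
  have hu0 : s.coeff μ0 ∈ A := by
    have hrel := h0
    rw [eval_eq_sum_support, ← Finset.add_sum_erase _ _ hμ0mem] at hrel
    rw [hμ0, hPsingle, mul_one, ← hμ0] at hrel
    have : s.coeff μ0 = -∑ α ∈ s.support.erase μ0,
        s.coeff α * (α.prod fun k e => p k ^ e) := eq_neg_of_add_eq_zero_left hrel
    rw [this]
    refine Subalgebra.neg_mem A (Subalgebra.sum_mem A fun α hα => ?_)
    have hαs : α ∈ s.support := Finset.mem_of_mem_erase hα
    have hαμ0 : α ≠ μ0 := Finset.ne_of_mem_erase hα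
    rcases eq_or_ne α μ1 with h' | h'
    · subst h'; exact Subalgebra.mul_mem A hu1 (hP _)
    rcases eq_or_ne α μ2 with h'' | h''
    · subst h''; exact Subalgebra.mul_mem A hu2 (hP _)
    exact Subalgebra.mul_mem A (hSubA α (hdeg α hαs) hαμ0 h' h'') (hP _)
  -- all coefficients lie in A
  have hall : ∀ i : ι, s.coeff (i : Fin 3 →₀ ℕ) ∈ A := by
    intro i
    rcases eq_or_ne (i : Fin 3 →₀ ℕ) μ0 with h' | h'
    · rw [h']; exact hu0
    rcases eq_or_ne (i : Fin 3 →₀ ℕ) μ1 with h'' | h''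
    · rw [h'']; exact hu1
    rcases eq_or_ne (i : Fin 3 →₀ ℕ) μ2 with h''' | h'''
    · rw [h''']; exact hu2
    exact hSubA _ i.2 h' h'' h'''
  -- finiteness
  have hbound : ∀ (α : ι) (i : Fin 3), (α : Fin 3 →₀ ℕ) i ≤ d := by
    intro α i
    have h := α.2
    have h2 := Finsupp.le_degree i (α : Fin 3 →₀ ℕ)
    rw [deg3] at h2
    omega
  haveI : Finite ι := by
    refine Finite.of_injective
      (fun α : ι => (fun i => (⟨(α : Fin 3 →₀ ℕ) i, Nat.lt_succ_of_le (hbound α i)⟩ : Fin (d+1)) :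
        Fin 3 → Fin (d + 1))) ?_
    intro a b hab
    refine Subtype.ext (Finsupp.ext fun i => ?_)
    exact congrArg Fin.val (congrFun hab i)
  haveI : Fintype ι := Fintype.ofFinite _
  haveI : Finite Sub := Subtype.finite
  haveI : Fintype Sub := Fintype.ofFinite _
  -- cardinality
  have hg : Function.Injective (Sum.elim (fun β : Sub => (β.1 : ι))
      ![(⟨μ0, hdegμ0⟩ : ι), ⟨μ1, hdegμ1⟩, ⟨μ2, hdegμ2⟩]) := by
    rintro (a | a) (b | b) h
    · exact congrArg Sum.inl (Subtype.ext h)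
    · exfalso
      fin_cases b
      · exact a.2.1 (congrArg Subtype.val h)
      · exact a.2.2.1 (congrArg Subtype.val h)
      · exact a.2.2.2 (congrArg Subtype.val h)
    · exfalso
      fin_cases a
      · exact b.2.1 (congrArg Subtype.val h.symm)
      · exact b.2.2.1 (congrArg Subtype.val h.symm)
      · exact b.2.2.2 (congrArg Subtype.val h.symm)
    · congr 1
      fin_cases a <;> fin_cases b <;>
        first
          | rfl
          | (exfalso;
             first
               | exact hμ01 (congrArg Subtype.val h)
               | exact hμ02 (congrArg Subtype.val h)
               | exact hμ12 (congrArg Subtype.val h)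
               | exact hμ01 (congrArg Subtype.val h.symm)
               | exact hμ02 (congrArg Subtype.val h.symm)
               | exact hμ12 (congrArg Subtype.val h.symm))
  have hcard : Fintype.card (Sub ⊕ Fin 2) < Fintype.card ι := by
    have h3 := Fintype.card_le_of_injective _ hg
    simp only [Fintype.card_sum, Fintype.card_fin] at h3 ⊢
    omega
  exact not_algebraicIndependent_of_card_lt hcard
    (fun α : ι => s.coeff (α : Fin 3 →₀ ℕ)) w hall hgen


theorem key_lemma' (L K : Type) [Field L] [Field K] [Algebra L K] (d : ℕ) (hd : 1 ≤ d)
    (s : MvPolynomial (Fin 3) K) (hshom : s.IsHomogeneous d)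
    (hgen : AlgebraicIndependent L
      (fun α : {α : Fin 3 →₀ ℕ // α 0 + α 1 + α 2 = d} => s.coeff (α : Fin 3 →₀ ℕ)))
    (p : Fin 3 → K) (j j1 j2 : Fin 3)
    (hcov : ∀ k : Fin 3, k = j ∨ k = j1 ∨ k = j2)
    (hjj1 : j ≠ j1) (hjj2 : j ≠ j2) (hj12 : j1 ≠ j2)
    (hpj : p j ≠ 0) (h0 : eval p s = 0)
    (hg : ∀ i, eval p (pderiv i s) = 0) : False :=
  key_lemma L K d hd s hshom hgen (fun k => (p j)⁻¹ * p k) j j1 j2 hcov hjj1 hjj2 hj12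
    (inv_mul_cancel₀ hpj)
    (by rw [eval_scale hshom, h0, mul_zero])
    (by rw [eval_scale_pderiv hshom, hg j1, mul_zero])
    (by rw [eval_scale_pderiv hshom, hg j2, mul_zero])

/-- The generic degree-`d` projective plane curve is smooth (in all characteristics):
if `s ∈ K[X,Y,Z]` is homogeneous of degree `d ≥ 1` and its coefficients, indexed by the
monomials of degree `d`, are algebraically independent over `L`, then at every nonzero
zero `p ∈ K³` of `s` the gradient of `s` is nonzero. -/
theorem generic_curve_smooth (L K : Type) [Field L] [IsAlgClosed L]
    [Field K] [IsAlgClosed K] [Algebra L K] (d : ℕ) (hd : 1 ≤ d)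
    (s : MvPolynomial (Fin 3) K) (hshom : s.IsHomogeneous d)
    (hgen : AlgebraicIndependent L
      (fun α : {α : Fin 3 →₀ ℕ // α 0 + α 1 + α 2 = d} => s.coeff (α : Fin 3 →₀ ℕ))) :
    ∀ p : Fin 3 → K, p ≠ 0 → eval p s = 0 →
      (fun i : Fin 3 => eval p (pderiv i s)) ≠ 0 := by
  intro p hp h0 hgrad
  have hg : ∀ i, eval p (pderiv i s) = 0 := fun i => congrFun hgrad i
  obtain ⟨j, hj⟩ : ∃ j, p j ≠ 0 := by
    by_contra h
    push_neg at h
    exact hp (funext fun i => h i)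
  fin_cases j
  · exact key_lemma' L K d hd s hshom hgen p 0 1 2 (by decide) (by decide) (by decide)
      (by decide) hj h0 hg
  · exact key_lemma' L K d hd s hshom hgen p 1 0 2 (by decide) (by decide) (by decide)
      (by decide) hj h0 hg
  · exact key_lemma' L K d hd s hshom hgen p 2 0 1 (by decide) (by decide) (by decide)
      (by decide) hj h0 hg
end

section
/- Let L be an algebraically closed field, K a field extension of L, and d ≥ 1. Let (u_{ij})_{0 ≤ i+j ≤ d} be a family of elements of K that is algebraically independent over L. If (x₀, y₀) ∈ K² satisfies ∑_{0 ≤ i+j ≤ d} u_{ij}·x₀^i·y₀^j = 0, then at least one of x₀, y₀ is transcendental over L. -/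
open Polynomial in
lemma my_mem_range {L K : Type} [Field L] [IsAlgClosed L] [Field K] [Algebra L K]
    {x : K} (hx : IsAlgebraic L x) : ∃ a : L, algebraMap L K a = x := by
  have hint := hx.isIntegral
  refine ⟨-(minpoly L x).coeff 0, ?_⟩
  have hq : (minpoly L x).leadingCoeff = 1 := minpoly.monic hint
  have h : (minpoly L x).degree = 1 :=
    IsAlgClosed.degree_eq_one_of_irreducible L (minpoly.irreducible hint)
  have : aeval x (minpoly L x) = 0 := minpoly.aeval L x
  rw [eq_X_add_C_of_degree_eq_one h, hq, C_1, one_mul, aeval_add, aeval_X, aeval_C,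
    add_eq_zero_iff_eq_neg] at this
  rw [map_neg]; exact this.symm

/-- Any point on the generic degree-`d` plane curve has transcendence degree ≥ 1 over `L`
(claim in Lemma 4.12): if the coefficients `u_{ij}` (for `i + j ≤ d`) are algebraically
independent over the algebraically closed field `L` and `∑_{i+j≤d} u_{ij} x₀^i y₀^j = 0`,
then `x₀` or `y₀` is transcendental over `L`. -/
theorem generic_curve_point_transcendental (L K : Type) [Field L] [IsAlgClosed L]
    [Field K] [Algebra L K] (d : ℕ) (hd : 1 ≤ d)
    (u : Fin (d + 1) → Fin (d + 1) → K)
    (hu : AlgebraicIndependent L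
      (fun p : {q : Fin (d + 1) × Fin (d + 1) // (q.1 : ℕ) + (q.2 : ℕ) ≤ d} =>
        u p.1.1 p.1.2))
    (x₀ y₀ : K)
    (hzero : ∑ i : Fin (d + 1), ∑ j : Fin (d + 1),
      (if (i : ℕ) + (j : ℕ) ≤ d then u i j * x₀ ^ (i : ℕ) * y₀ ^ (j : ℕ) else 0) = 0) :
    Transcendental L x₀ ∨ Transcendental L y₀ := by
  by_contra h
  push_neg at h
  obtain ⟨hx, hy⟩ := h
  rw [Transcendental, not_not] at hx hy
  obtain ⟨a, ha⟩ := my_mem_range hx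
  obtain ⟨b, hb⟩ := my_mem_range hy
  set ι := {q : Fin (d + 1) × Fin (d + 1) // (q.1 : ℕ) + (q.2 : ℕ) ≤ d}
  -- rewrite hzero as a sum over the subtype
  have key : ∑ q : ι, (a ^ (q.1.1 : ℕ) * b ^ (q.1.2 : ℕ)) • u q.1.1 q.1.2 = 0 := by
    have h2 := Fintype.sum_prod_type (γ := K)
      (f := fun q : Fin (d+1) × Fin (d+1) =>
        if (q.1 : ℕ) + (q.2 : ℕ) ≤ d then u q.1 q.2 * x₀ ^ (q.1 : ℕ) * y₀ ^ (q.2 : ℕ) else 0)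
    rw [← hzero, ← h2, ← Finset.sum_filter]
    rw [Finset.sum_subtype (p := fun q : Fin (d+1) × Fin (d+1) => (q.1 : ℕ) + (q.2 : ℕ) ≤ d) (Finset.univ.filter
      (fun q : Fin (d+1) × Fin (d+1) => (q.1 : ℕ) + (q.2 : ℕ) ≤ d))
      (by simp) (fun q => u q.1 q.2 * x₀ ^ (q.1 : ℕ) * y₀ ^ (q.2 : ℕ))]
    refine Finset.sum_congr rfl fun q _ => ?_
    rw [Algebra.smul_def, ← ha, ← hb, map_mul, map_pow, map_pow]
    ring
  have hli := hu.linearIndependent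
  rw [Fintype.linearIndependent_iff] at hli
  have h0 := hli (fun q => a ^ (q.1.1 : ℕ) * b ^ (q.1.2 : ℕ)) key
    ⟨(0, 0), by simp⟩
  simp at h0
end

section
/- Let L be an algebraically closed field, let f, g ∈ L[x,y], and let p ∈ L² be a point with f(p) = 0 and g(p) = 0. Suppose the Jacobian determinant (∂f/∂x · ∂g/∂y − ∂f/∂y · ∂g/∂x)(p) is nonzero (the curves f = 0 and g = 0 are both smooth at p and meet transversally there). Then I(f,g,p) = 1. -/
open MvPolynomial

set_option maxHeartbeats 1000000

/-- The maximal ideal of `L[x,y]` corresponding to the point `p = (p₁, p₂)`, i.e. the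
kernel of evaluation at `p`, which is the ideal `(x - p₁, y - p₂)`. -/
noncomputable def ptIdeal (L : Type) [Field L] (p : L × L) : Ideal (MvPolynomial (Fin 2) L) :=
  RingHom.ker (aeval (R := L) ![p.1, p.2])

theorem ptIdeal_isMaximal (L : Type) [Field L] (p : L × L) : (ptIdeal L p).IsMaximal :=
  RingHom.ker_isMaximal_of_surjective _ (fun x => ⟨C x, by simp⟩)

/-- The intersection multiplicity `I(f, g, p)` of the plane curves `f = 0` and `g = 0`
at the point `p`: the dimension over `L` of the localization of `L[x,y]/(f,g)` at the
maximal ideal `(x - p₁, y - p₂)`. -/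
noncomputable def interMult (L : Type) [Field L] (f g : MvPolynomial (Fin 2) L)
    (p : L × L) : Cardinal :=
  haveI : (ptIdeal L p).IsPrime := (ptIdeal_isMaximal L p).isPrime
  letI : Algebra L (Localization.AtPrime (ptIdeal L p)) :=
    ((algebraMap (MvPolynomial (Fin 2) L) (Localization.AtPrime (ptIdeal L p))).comp
      (algebraMap L (MvPolynomial (Fin 2) L))).toAlgebra
  Module.rank L
    (Localization.AtPrime (ptIdeal L p) ⧸
      (Ideal.span {algebraMap (MvPolynomial (Fin 2) L) (Localization.AtPrime (ptIdeal L p)) f,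
        algebraMap (MvPolynomial (Fin 2) L) (Localization.AtPrime (ptIdeal L p)) g}))

lemma mem_ptIdeal_iff (L : Type) [Field L] (p : L × L) (q : MvPolynomial (Fin 2) L) :
    q ∈ ptIdeal L p ↔ eval ![p.1, p.2] q = 0 := by
  rw [ptIdeal, RingHom.mem_ker]
  constructor
  · intro h; rw [← coe_aeval_eq_eval]; exact h
  · intro h; show RingHomClass.toRingHom (aeval (R := L) ![p.1, p.2]) q = 0
    rw [coe_aeval_eq_eval]; exact h

lemma sub_C_eval_mem_span (L : Type) [Field L] (p : L × L) (q : MvPolynomial (Fin 2) L) :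
    q - C (eval ![p.1, p.2] q) ∈
      Ideal.span {X 0 - C p.1, (X 1 - C p.2 : MvPolynomial (Fin 2) L)} := by
  induction q using MvPolynomial.induction_on with
  | C a => simp
  | add q r hq hr =>
      have := Ideal.add_mem _ hq hr
      convert this using 1
      push_cast [map_add]
      ring
  | mul_X q i hq =>
      have hX : X i - C (![p.1, p.2] i) ∈
          Ideal.span {X 0 - C p.1, (X 1 - C p.2 : MvPolynomial (Fin 2) L)} := by
        fin_cases i
        · exact Ideal.subset_span (by simp)
        · exact Ideal.subset_span (by simp)
      have h1 : q * X i - C (eval ![p.1, p.2] (q * X i)) =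
          q * (X i - C (![p.1, p.2] i)) + C (![p.1, p.2] i) * (q - C (eval ![p.1, p.2] q)) := by
        simp only [map_mul, eval_X]
        push_cast [map_mul]
        ring
      rw [h1]
      exact Ideal.add_mem _ (Ideal.mul_mem_left _ _ hX) (Ideal.mul_mem_left _ _ hq)

lemma ptIdeal_eq_span (L : Type) [Field L] (p : L × L) :
    ptIdeal L p = Ideal.span {X 0 - C p.1, (X 1 - C p.2 : MvPolynomial (Fin 2) L)} := by
  ext q
  rw [mem_ptIdeal_iff]
  constructor
  · intro h
    have := sub_C_eval_mem_span L p q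
    rw [h] at this
    simpa using this
  · intro h
    refine Submodule.span_induction ?_ ?_ ?_ ?_ h
    · rintro x (rfl | rfl) <;> simp
    · simp
    · intro x y _ _ hx hy; simp [hx, hy]
    · intro a x _ hx; simp [hx]

lemma taylor_coeffs (L : Type) [Field L] (p : L × L) (q : MvPolynomial (Fin 2) L)
    (hq : eval ![p.1, p.2] q = 0) :
    ∃ a b : MvPolynomial (Fin 2) L, q = a * (X 0 - C p.1) + b * (X 1 - C p.2) ∧
      eval ![p.1, p.2] a = eval ![p.1, p.2] (pderiv 0 q) ∧
      eval ![p.1, p.2] b = eval ![p.1, p.2] (pderiv 1 q) := by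
  have hmem : q ∈ Ideal.span {X 0 - C p.1, (X 1 - C p.2 : MvPolynomial (Fin 2) L)} := by
    rw [← ptIdeal_eq_span, mem_ptIdeal_iff]; exact hq
  obtain ⟨a, b, hab⟩ := Ideal.mem_span_pair.mp hmem
  refine ⟨a, b, hab.symm, ?_, ?_⟩
  · have : pderiv 0 q = pderiv 0 a * (X 0 - C p.1) + a * 1 +
        (pderiv 0 b * (X 1 - C p.2) + b * 0) := by
      rw [← hab]
      simp [pderiv_X_self, pderiv_X_of_ne (show (1 : Fin 2) ≠ 0 by decide), mul_comm]
      ring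
    rw [this]
    simp
  · have : pderiv 1 q = pderiv 1 a * (X 0 - C p.1) + a * 0 +
        (pderiv 1 b * (X 1 - C p.2) + b * 1) := by
      rw [← hab]
      simp [pderiv_X_self, pderiv_X_of_ne (show (0 : Fin 2) ≠ 1 by decide), mul_comm]
      ring
    rw [this]
    simp

/-- Lemma 4.17 (algebraic content): if the curves `f = 0` and `g = 0` pass through `p`
and the Jacobian determinant `(∂f/∂x·∂g/∂y − ∂f/∂y·∂g/∂x)(p)` is nonzero (both curves are
smooth at `p` and meet transversally there), then the intersection multiplicity at `p`
is `1`. -/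
theorem interMult_eq_one_of_transverse (L : Type) [Field L] [IsAlgClosed L]
    (f g : MvPolynomial (Fin 2) L) (p : L × L)
    (hf : eval ![p.1, p.2] f = 0) (hg : eval ![p.1, p.2] g = 0)
    (hjac : eval ![p.1, p.2] (pderiv 0 f) * eval ![p.1, p.2] (pderiv 1 g) -
      eval ![p.1, p.2] (pderiv 1 f) * eval ![p.1, p.2] (pderiv 0 g) ≠ 0) :
    interMult L f g p = 1 := by
  classical
  haveI hPrime : (ptIdeal L p).IsPrime := (ptIdeal_isMaximal L p).isPrime
  letI : Algebra L (Localization.AtPrime (ptIdeal L p)) :=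
    ((algebraMap (MvPolynomial (Fin 2) L) (Localization.AtPrime (ptIdeal L p))).comp
      (algebraMap L (MvPolynomial (Fin 2) L))).toAlgebra
  show Module.rank L
    (Localization.AtPrime (ptIdeal L p) ⧸
      (Ideal.span {algebraMap (MvPolynomial (Fin 2) L) (Localization.AtPrime (ptIdeal L p)) f,
        algebraMap (MvPolynomial (Fin 2) L) (Localization.AtPrime (ptIdeal L p)) g})) = 1
  set φ := algebraMap (MvPolynomial (Fin 2) L) (Localization.AtPrime (ptIdeal L p)) with hφ
  set I : Ideal (Localization.AtPrime (ptIdeal L p)) := Ideal.span {φ f, φ g} with hI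
  obtain ⟨a, b, hfab, hea, heb⟩ := taylor_coeffs L p f hf
  obtain ⟨a', b', hgab, hea', heb'⟩ := taylor_coeffs L p g hg
  -- determinant is a unit in the localization
  have hdet_mem : a * b' - b * a' ∈ (ptIdeal L p).primeCompl := by
    intro hmem
    have h0 : eval ![p.1, p.2] (a * b' - b * a') = 0 := (mem_ptIdeal_iff L p _).mp hmem
    simp only [map_sub, map_mul, hea, heb, hea', heb'] at h0
    exact hjac h0
  have hdet_unit : IsUnit (φ (a * b' - b * a')) :=
    (IsLocalization.AtPrime.isUnit_to_map_iff (Localization.AtPrime (ptIdeal L p))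
      (ptIdeal L p) _).mpr hdet_mem
  -- u and v are in I
  have hu_mem : φ (X 0 - C p.1) ∈ I := by
    rw [← Ideal.unit_mul_mem_iff_mem I hdet_unit, ← map_mul]
    have : (a * b' - b * a') * (X 0 - C p.1) = b' * f - b * g := by
      rw [hfab, hgab]; ring
    rw [this, map_sub, map_mul, map_mul]
    exact Ideal.sub_mem _ (Ideal.mul_mem_left _ _ (Ideal.subset_span (by simp)))
      (Ideal.mul_mem_left _ _ (Ideal.subset_span (by simp)))
  have hv_mem : φ (X 1 - C p.2) ∈ I := by
    rw [← Ideal.unit_mul_mem_iff_mem I hdet_unit, ← map_mul]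
    have : (a * b' - b * a') * (X 1 - C p.2) = a * g - a' * f := by
      rw [hfab, hgab]; ring
    rw [this, map_sub, map_mul, map_mul]
    exact Ideal.sub_mem _ (Ideal.mul_mem_left _ _ (Ideal.subset_span (by simp)))
      (Ideal.mul_mem_left _ _ (Ideal.subset_span (by simp)))
  -- I equals the image of the point ideal
  have hspan : Ideal.map φ (ptIdeal L p) =
      Ideal.span {φ (X 0 - C p.1), φ (X 1 - C p.2)} := by
    have h1 := congrArg (Ideal.map φ) (ptIdeal_eq_span L p)
    rw [Ideal.map_span, Set.image_insert_eq, Set.image_singleton] at h1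
    exact h1
  have hImap : I = Ideal.map φ (ptIdeal L p) := by
    rw [hspan]
    apply le_antisymm
    · rw [hI, Ideal.span_le]
      rintro x (rfl | rfl)
      · rw [hfab]
        push_cast [map_add, map_mul]
        exact Ideal.add_mem _ (Ideal.mul_mem_left _ _ (Ideal.subset_span (by simp)))
          (Ideal.mul_mem_left _ _ (Ideal.subset_span (by simp)))
      · rw [hgab]
        push_cast [map_add, map_mul]
        exact Ideal.add_mem _ (Ideal.mul_mem_left _ _ (Ideal.subset_span (by simp)))
          (Ideal.mul_mem_left _ _ (Ideal.subset_span (by simp)))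
    · rw [Ideal.span_le]
      rintro x (rfl | rfl)
      · exact hu_mem
      · exact hv_mem
  have hImax : I = IsLocalRing.maximalIdeal (Localization.AtPrime (ptIdeal L p)) := by
    rw [hImap, Localization.AtPrime.map_eq_maximalIdeal]
  have hIneTop : I ≠ ⊤ := by
    rw [hImax]
    exact (IsLocalRing.maximalIdeal.isMaximal _).ne_top
  haveI : Nontrivial ((Localization.AtPrime (ptIdeal L p)) ⧸ I) :=
    Ideal.Quotient.nontrivial_iff.mpr hIneTop
  set ψ : L →+* (Localization.AtPrime (ptIdeal L p) ⧸ I) :=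
    (Ideal.Quotient.mk I).comp (φ.comp (algebraMap L (MvPolynomial (Fin 2) L))) with hψdef
  have hsurj : Function.Surjective ψ := by
    intro z
    obtain ⟨s, rfl⟩ := Ideal.Quotient.mk_surjective z
    obtain ⟨r, m, rfl⟩ : ∃ r m, IsLocalization.mk' (Localization.AtPrime (ptIdeal L p)) r m = s :=
      let ⟨⟨r, m⟩, h⟩ := IsLocalization.mk'_surjective (ptIdeal L p).primeCompl s; ⟨r, m, h⟩
    have hm0 : eval ![p.1, p.2] (m : MvPolynomial (Fin 2) L) ≠ 0 := by
      intro h0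
      exact m.2 ((mem_ptIdeal_iff L p _).mpr h0)
    refine ⟨eval ![p.1, p.2] r / eval ![p.1, p.2] (m : MvPolynomial (Fin 2) L), ?_⟩
    have hψ : ψ (eval ![p.1, p.2] r / eval ![p.1, p.2] (m : MvPolynomial (Fin 2) L)) =
        Ideal.Quotient.mk I (φ (C (eval ![p.1, p.2] r /
          eval ![p.1, p.2] (m : MvPolynomial (Fin 2) L)))) := rfl
    rw [hψ, Ideal.Quotient.eq]
    have hm_unit : IsUnit (φ (m : MvPolynomial (Fin 2) L)) :=
      (IsLocalization.AtPrime.isUnit_to_map_iff (Localization.AtPrime (ptIdeal L p))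
        (ptIdeal L p) _).mpr m.2
    rw [← Ideal.unit_mul_mem_iff_mem I hm_unit, mul_sub, ← map_mul,
      IsLocalization.mul_mk'_eq_mk'_of_mul, IsLocalization.mk'_mul_cancel_left,
      ← map_sub, hImap]
    apply Ideal.mem_map_of_mem
    rw [mem_ptIdeal_iff]
    simp only [map_sub, map_mul, eval_C]
    field_simp
    simp
  have hinj : Function.Injective ψ := ψ.injective
  have hCsmul : ∀ (c : L) (s : Localization.AtPrime (ptIdeal L p)), c • s = φ (C c) * s := by
    intro c s
    refine Localization.induction_on s ?_
    rintro ⟨r, t⟩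
    rw [Localization.smul_mk, ← Localization.mk_one_eq_algebraMap, Localization.mk_mul,
      MvPolynomial.smul_eq_C_mul, one_mul]
  have hsmul : ∀ (c x : L), ψ (c * x) = c • ψ x := by
    intro c x
    have h3 : ψ (c * x) = Ideal.Quotient.mk I (c • φ (C x)) := by
      show Ideal.Quotient.mk I (φ (C (c * x))) = _
      rw [hCsmul, map_mul, map_mul]
    rw [h3]
    exact (Submodule.Quotient.mk_smul I c (φ (C x))).symm
  let Ψ : L →ₗ[L] (Localization.AtPrime (ptIdeal L p) ⧸ I) :=
    { toFun := ψ
      map_add' := map_add ψ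
      map_smul' := hsmul }
  have hbij : Function.Bijective Ψ := ⟨fun u v h => hinj h, fun z => hsurj z⟩
  rw [← (LinearEquiv.ofBijective Ψ hbij).rank_eq, Module.rank_self]
end

section
/- Let L be a field and let G ∈ L[[X,Y]] be a formal power series with G(0,0) = 0 (zero constant coefficient) and ∂G/∂Y(0,0) ≠ 0 (the coefficient of the monomial Y in G is nonzero). Then there exists a power series η ∈ L[[X]] with zero constant coefficient such that substituting Y = η(X) into G gives the zero power series: G(X, η(X)) = 0. -/
/-- Substitution of `Y = η(X)` into a two-variable formal power series `G(X,Y)`: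
the `n`-th coefficient of `G(X, η(X))` is `∑_{i,j ≤ n} G_{ij}·(coeff of X^n in X^i·η^j)`.
When `η` has zero constant coefficient only the terms with `i + j ≤ n` contribute, so
this is the usual composition of formal power series. -/
noncomputable def substY (L : Type) [Field L] (η : PowerSeries L)
    (G : MvPowerSeries (Fin 2) L) : PowerSeries L :=
  PowerSeries.mk fun n => ∑ i ∈ Finset.range (n + 1), ∑ j ∈ Finset.range (n + 1),
    MvPowerSeries.coeff (Finsupp.single (0 : Fin 2) i + Finsupp.single (1 : Fin 2) j) G *
      PowerSeries.coeff n (PowerSeries.X ^ i * η ^ j)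

namespace ImplicitAux

open PowerSeries Finset

variable {L : Type} [Field L]

noncomputable def Gc (G : MvPowerSeries (Fin 2) L) (i j : ℕ) : L :=
  MvPowerSeries.coeff (Finsupp.single (0 : Fin 2) i + Finsupp.single (1 : Fin 2) j) G

noncomputable def Sfun (G : MvPowerSeries (Fin 2) L) (c : ℕ → L) (n : ℕ) : L :=
  ∑ i ∈ range (n + 1), ∑ j ∈ range (n + 1),
    Gc G i j * PowerSeries.coeff n (PowerSeries.X ^ i * (PowerSeries.mk c) ^ j)

lemma coeff_pow_congr (f g : PowerSeries L) (n : ℕ)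
    (h : ∀ k ≤ n, PowerSeries.coeff k f = PowerSeries.coeff k g) (j : ℕ) :
    ∀ k ≤ n, PowerSeries.coeff k (f ^ j) = PowerSeries.coeff k (g ^ j) := by
  induction j with
  | zero => intro k hk; simp
  | succ j ih =>
    intro k hk
    rw [pow_succ, pow_succ, PowerSeries.coeff_mul, PowerSeries.coeff_mul]
    refine Finset.sum_congr rfl fun p hp => ?_
    rw [Finset.HasAntidiagonal.mem_antidiagonal] at hp
    rw [ih p.1 (le_trans (by omega) hk), h p.2 (le_trans (by omega) hk)]

lemma coeff_pow_eq_of_lt {f g : PowerSeries L} {n : ℕ}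
    (hf : PowerSeries.coeff 0 f = 0) (hg : PowerSeries.coeff 0 g = 0)
    (hfg : ∀ k < n, PowerSeries.coeff k f = PowerSeries.coeff k g) (j : ℕ) :
    PowerSeries.coeff n (f ^ (j + 2)) = PowerSeries.coeff n (g ^ (j + 2)) := by
  rw [pow_succ' f (j+1), pow_succ' g (j+1), PowerSeries.coeff_mul, PowerSeries.coeff_mul]
  refine Finset.sum_congr rfl fun p hp => ?_
  rw [Finset.HasAntidiagonal.mem_antidiagonal] at hp
  rcases eq_or_lt_of_le (show p.1 ≤ n by omega) with h1 | h1
  · have hp2 : p.2 = 0 := by omega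
    have hf' : PowerSeries.coeff p.2 (f ^ (j+1)) = 0 := by
      rw [hp2, PowerSeries.coeff_zero_eq_constantCoeff, map_pow,
        ← PowerSeries.coeff_zero_eq_constantCoeff, hf, zero_pow (by omega)]
    have hg' : PowerSeries.coeff p.2 (g ^ (j+1)) = 0 := by
      rw [hp2, PowerSeries.coeff_zero_eq_constantCoeff, map_pow,
        ← PowerSeries.coeff_zero_eq_constantCoeff, hg, zero_pow (by omega)]
    rw [hf', hg', mul_zero, mul_zero]
  · rw [hfg p.1 h1]
    rcases Nat.eq_zero_or_pos p.1 with h0 | h0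
    · rw [h0, hg, zero_mul, zero_mul]
    · have hp2 : p.2 < n := by omega
      rw [coeff_pow_congr f g p.2 (fun k hk => hfg k (by omega)) (j+1) p.2 le_rfl]

lemma coeff_X_pow_mul_pow (c : ℕ → L) (hc0 : c 0 = 0) {n : ℕ} (hn : 1 ≤ n) (i j : ℕ) :
    PowerSeries.coeff n (PowerSeries.X ^ i * (PowerSeries.mk c) ^ j)
      = PowerSeries.coeff n
          (PowerSeries.X ^ i * (PowerSeries.mk fun k => if k < n then c k else 0) ^ j)
        + if i = 0 ∧ j = 1 then c n else 0 := by
  set c' : ℕ → L := fun k => if k < n then c k else 0 with hc'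
  have hc'0 : c' 0 = 0 := by simp [hc', hn, hc0]
  have hagree : ∀ k < n, PowerSeries.coeff k (PowerSeries.mk c)
      = PowerSeries.coeff k (PowerSeries.mk c') := by
    intro k hk; simp [PowerSeries.coeff_mk, hc', hk]
  rw [mul_comm (PowerSeries.X ^ i) _, mul_comm (PowerSeries.X ^ i) _,
    PowerSeries.coeff_mul_X_pow', PowerSeries.coeff_mul_X_pow']
  by_cases hi : i ≤ n
  · rw [if_pos hi, if_pos hi]
    match j with
    | 0 => simp
    | 1 =>
      rcases Nat.eq_zero_or_pos i with h0 | h0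
      · subst h0
        simp [PowerSeries.coeff_mk, hc']
      · have : ¬ (i = 0 ∧ 1 = 1) := by omega
        rw [if_neg this, add_zero, pow_one, pow_one, PowerSeries.coeff_mk,
          PowerSeries.coeff_mk]
        simp [hc', Nat.sub_lt_of_pos_le h0 hi]
    | (j+2) =>
      have hif : (if i = 0 ∧ j + 2 = 1 then c n else 0) = 0 := by simp
      rw [hif, add_zero]
      rcases Nat.eq_zero_or_pos i with h0 | h0
      · subst h0
        simpa using coeff_pow_eq_of_lt (by simpa [PowerSeries.coeff_mk] using hc0)
          (by simpa [PowerSeries.coeff_mk] using hc'0) hagree j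
      · exact coeff_pow_congr _ _ (n - i)
          (fun k hk => hagree k (by omega)) (j+2) (n - i) le_rfl
  · rw [if_neg hi, if_neg hi]
    have : ¬ (i = 0 ∧ j = 1) := by rintro ⟨rfl, -⟩; omega
    rw [if_neg this, add_zero]

lemma Sfun_split (G : MvPowerSeries (Fin 2) L) (c : ℕ → L) (hc0 : c 0 = 0) {n : ℕ}
    (hn : 1 ≤ n) :
    Sfun G c n = Sfun G (fun k => if k < n then c k else 0) n + Gc G 0 1 * c n := by
  unfold Sfun
  have : ∀ i ∈ range (n+1), ∀ j ∈ range (n+1),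
      Gc G i j * PowerSeries.coeff n (PowerSeries.X ^ i * (PowerSeries.mk c) ^ j)
      = Gc G i j * PowerSeries.coeff n
          (PowerSeries.X ^ i * (PowerSeries.mk fun k => if k < n then c k else 0) ^ j)
        + (if i = 0 ∧ j = 1 then Gc G i j * c n else 0) := by
    intro i _ j _
    rw [coeff_X_pow_mul_pow c hc0 hn i j, mul_add]
    congr 1
    split <;> simp
  rw [Finset.sum_congr rfl fun i hi => Finset.sum_congr rfl fun j hj => this i hi j hj]
  rw [Finset.sum_congr rfl fun i _ => Finset.sum_add_distrib, Finset.sum_add_distrib]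
  congr 1
  have h1 : ∀ i ∈ range (n+1), (∑ j ∈ range (n+1),
      if i = 0 ∧ j = 1 then Gc G i j * c n else 0)
      = if i = 0 then Gc G 0 1 * c n else 0 := by
    intro i _
    by_cases hi : i = 0
    · subst hi
      rw [Finset.sum_eq_single_of_mem 1 (Finset.mem_range.mpr (by omega))]
      · simp
      · intro j _ hj; simp [hj]
    · simp [hi]
  rw [Finset.sum_congr rfl h1, Finset.sum_eq_single_of_mem 0 (Finset.mem_range.mpr (by omega))]
  · simp
  · intro i _ hi; simp [hi]

noncomputable def etaC (G : MvPowerSeries (Fin 2) L) : ℕ → L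
  | n =>
    if n = 0 then 0
    else -(MvPowerSeries.coeff (Finsupp.single (1 : Fin 2) 1) G)⁻¹ *
      Sfun G (fun k => if h : k < n then etaC G k else 0) n
  termination_by n => n
  decreasing_by exact h

end ImplicitAux



/-- Implicit function theorem for formal power series (used in Lemma 4.17): if
`G ∈ L[[X,Y]]` has `G(0,0) = 0` and `∂G/∂Y(0,0) ≠ 0` (the coefficient of `Y` in `G` is
nonzero), then there is a power series `η ∈ L[[X]]` with zero constant term such that
`G(X, η(X)) = 0`. -/
theorem implicit_function_theorem_powerSeries (L : Type) [Field L]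
    (G : MvPowerSeries (Fin 2) L)
    (hG0 : MvPowerSeries.constantCoeff G = 0)
    (hGY : MvPowerSeries.coeff (Finsupp.single (1 : Fin 2) 1) G ≠ 0) :
    ∃ η : PowerSeries L, PowerSeries.constantCoeff η = 0 ∧ substY L η G = 0 := by
  set a := MvPowerSeries.coeff (Finsupp.single (1 : Fin 2) 1) G with ha
  set c := ImplicitAux.etaC G with hc
  have hc0 : c 0 = 0 := by rw [hc, ImplicitAux.etaC]; simp
  have hsub : ∀ m, PowerSeries.coeff m (substY L (PowerSeries.mk c) G)
      = ImplicitAux.Sfun G c m := by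
    intro m
    simp [substY, ImplicitAux.Sfun, ImplicitAux.Gc, PowerSeries.coeff_mk]
  refine ⟨PowerSeries.mk c, ?_, ?_⟩
  · rw [← PowerSeries.coeff_zero_eq_constantCoeff, PowerSeries.coeff_mk, hc0]
  · refine PowerSeries.ext fun n => ?_
    rw [hsub n, map_zero]
    rcases Nat.eq_zero_or_pos n with h0 | hn
    · subst h0
      simp [ImplicitAux.Sfun, ImplicitAux.Gc]
      simpa [MvPowerSeries.coeff_zero_eq_constantCoeff] using hG0
    · rw [ImplicitAux.Sfun_split G c hc0 hn]
      have hga : ImplicitAux.Gc G 0 1 = a := by simp [ImplicitAux.Gc, ha]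
      have hcn : c n = -a⁻¹ * ImplicitAux.Sfun G (fun k => if k < n then c k else 0) n := by
        rw [hc, ImplicitAux.etaC, if_neg (by omega)]
        simp [hc, ← ha]
      rw [hga, hcn]
      field_simp
      ring
end

section
/- Let L be an algebraically closed field, let f₁, f₂, g ∈ L[x,y], and let p ∈ L² be a common zero of f₁·f₂ and g. Suppose the intersection multiplicity I(f₁·f₂, g, p) is finite. Then I(f₁·f₂, g, p) = I(f₁, g, p) + I(f₂, g, p). -/
open MvPolynomial

/- ## Auxiliary lemmas -/

namespace InterMultAux

open UniqueFactorizationMonoid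

instance ptIdeal_isPrime (L : Type) [Field L] (p : L × L) : (ptIdeal L p).IsPrime :=
  (ptIdeal_isMaximal L p).isPrime

variable {L : Type} [Field L] {p : L × L}

local notation "Rl" => Localization.AtPrime (ptIdeal L p)
local notation "φ" => algebraMap (MvPolynomial (Fin 2) L) (Localization.AtPrime (ptIdeal L p))

theorem mem_ptIdeal {f : MvPolynomial (Fin 2) L} :
    f ∈ ptIdeal L p ↔ eval ![p.1, p.2] f = 0 := by
  rw [ptIdeal, RingHom.mem_ker, aeval_def, Algebra.algebraMap_self, eval₂_id]

theorem X0_sub_mem : (X 0 - C p.1 : MvPolynomial (Fin 2) L) ∈ ptIdeal L p := by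
  rw [mem_ptIdeal]; simp

theorem X1_sub_mem : (X 1 - C p.2 : MvPolynomial (Fin 2) L) ∈ ptIdeal L p := by
  rw [mem_ptIdeal]; simp

theorem prime_X0_sub (c : L) : Prime (X 0 - C c : MvPolynomial (Fin 2) L) := by
  rw [← MulEquiv.prime_iff (MvPolynomial.finSuccEquiv L 1).toRingEquiv.toMulEquiv]
  have h1 : (MvPolynomial.finSuccEquiv L 1).toRingEquiv.toMulEquiv (X 0 - C c)
      = Polynomial.X - Polynomial.C (C c) := by
    simp [RingEquiv.coe_toMulEquiv, AlgEquiv.coe_ringEquiv, finSuccEquiv_apply]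
  rw [h1]
  exact Polynomial.prime_X_sub_C _

theorem prime_X1_sub (c : L) : Prime (X 1 - C c : MvPolynomial (Fin 2) L) := by
  have h := (MulEquiv.prime_iff
    (renameEquiv L (Equiv.swap (0 : Fin 2) 1)).toRingEquiv.toMulEquiv).mpr
    (prime_X0_sub (L := L) c)
  have h1 : (renameEquiv L (Equiv.swap (0 : Fin 2) 1)).toRingEquiv.toMulEquiv (X 0 - C c)
      = X 1 - C c := by
    simp [RingEquiv.coe_toMulEquiv, AlgEquiv.coe_ringEquiv, renameEquiv_apply]
  rwa [h1] at h

/-- no prime divides both `X 0 - C p.1` and `X 1 - C p.2`. -/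
theorem no_common_prime_factor {q : MvPolynomial (Fin 2) L} (hq : Prime q)
    (h1 : q ∣ X 0 - C p.1) (h2 : q ∣ X 1 - C p.2) : False := by
  obtain ⟨a, ha⟩ := h1
  obtain ⟨b, hb⟩ := h2
  have hX0 : Prime (X 0 - C p.1 : MvPolynomial (Fin 2) L) := prime_X0_sub p.1
  have hdvd : (X 0 - C p.1 : MvPolynomial (Fin 2) L) ∣ (X 1 - C p.2) * a := by
    refine ⟨b, ?_⟩
    rw [hb, ha]; ring
  rcases hX0.dvd_or_dvd hdvd with h | h
  · obtain ⟨d, hd⟩ := h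
    have := congrArg (aeval (R := L) ![Polynomial.C p.1, Polynomial.X]) hd
    simp [Matrix.cons_val_zero, Matrix.cons_val_one] at this
    exact Polynomial.X_sub_C_ne_zero p.2 (by simpa using this)
  · obtain ⟨d, hd⟩ := h
    rw [hd, ← mul_assoc] at ha
    have h1 : (1 : MvPolynomial (Fin 2) L) * (X 0 - C p.1) = q * d * (X 0 - C p.1) := by
      rw [one_mul]
      nth_rewrite 1 [ha]
      ring
    have := mul_right_cancel₀ hX0.ne_zero h1
    exact hq.not_isUnit (IsUnit.of_mul_eq_one _ this.symm)

theorem exists_prime_factor {c : MvPolynomial (Fin 2) L} (hc : c ≠ 0) (hm : c ∈ ptIdeal L p) :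
    ∃ q, Prime q ∧ q ∈ ptIdeal L p ∧ q ∣ c := by
  obtain ⟨u, hu⟩ := (factors_prod hc).symm
  have hprod : (factors c).prod ∈ ptIdeal L p := hu ▸ Ideal.mul_mem_right _ _ hm
  obtain ⟨q, hqmem, hqm⟩ :=
    ((ptIdeal_isPrime L p).multiset_prod_mem_iff_exists_mem _).mp hprod
  exact ⟨q, prime_of_factor q hqmem, hqm, dvd_of_mem_factors hqmem⟩

theorem split_factor {R : Type} [CommRing R] [IsDomain R] [UniqueFactorizationMonoid R]
    {m : Ideal R} (hm : m.IsPrime) {c : R} (hc : c ≠ 0) :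
    ∃ c₀ c₁ : R, c = c₀ * c₁ ∧ c₁ ∉ m ∧ c₀ ≠ 0 ∧
      ∀ q, Prime q → q ∣ c₀ → q ∈ m ∧ q ∣ c := by
  obtain ⟨u, hu⟩ := (factors_prod hc).symm
  classical
  set s₀ := (factors c).filter (· ∈ m) with hs₀
  set s₁ := (factors c).filter (fun x => ¬ x ∈ m) with hs₁
  have hsplit : s₀ + s₁ = factors c := Multiset.filter_add_not _ _
  refine ⟨s₀.prod, s₁.prod * ↑u⁻¹, ?_, ?_, ?_, ?_⟩
  · rw [← mul_assoc, ← Multiset.prod_add, hsplit, ← hu]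
    simp
  · intro hmem
    rcases hm.mul_mem_iff_mem_or_mem.mp hmem with h | h
    · obtain ⟨r, hr, hrm⟩ := (hm.multiset_prod_mem_iff_exists_mem _).mp h
      exact (Multiset.of_mem_filter hr) hrm
    · exact hm.ne_top (Ideal.eq_top_of_isUnit_mem m h u⁻¹.isUnit)
  · intro h0
    have : (0 : R) ∈ s₀ := by
      have := Multiset.prod_eq_zero_iff.mp h0
      exact this
    have h0f : (0 : R) ∈ factors c := Multiset.mem_of_mem_filter this
    exact (prime_of_factor 0 h0f).ne_zero rfl
  · intro q hq hdvd
    obtain ⟨r, hr, hqr⟩ := hq.exists_mem_multiset_dvd hdvd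
    have hrm : r ∈ m := Multiset.of_mem_filter hr
    have hrf : r ∈ factors c := Multiset.mem_of_mem_filter hr
    constructor
    · obtain ⟨k, hk⟩ := hqr
      have hrprime := prime_of_factor r hrf
      rcases (hrprime.irreducible.isUnit_or_isUnit hk).symm with h | h
      · obtain ⟨ku, hku⟩ := h
        have : q = r * ↑ku⁻¹ := by
          rw [hk, ← hku]
          rw [mul_assoc, Units.mul_inv, mul_one]
        rw [this]
        exact Ideal.mul_mem_right _ _ hrm
      · exact absurd h hq.not_isUnit
    · exact hqr.trans (dvd_of_mem_factors hrf)

theorem phi_inj : Function.Injective (φ) :=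
  IsLocalization.injective _ (ptIdeal L p).primeCompl_le_nonZeroDivisors

/-- Key divisibility transfer in the localization. -/
theorem loc_dvd_transfer {c d : MvPolynomial (Fin 2) L} (hc : c ≠ 0)
    (hnc : ∀ q, Prime q → q ∈ ptIdeal L p → q ∣ c → q ∣ d → False)
    (w b : Rl) (h : φ d * w = b * φ c) : ∃ r : Rl, w = r * φ c := by
  obtain ⟨⟨u, s⟩, hu⟩ := IsLocalization.surj (M := (ptIdeal L p).primeCompl) w
  obtain ⟨⟨v, t⟩, hv⟩ := IsLocalization.surj (M := (ptIdeal L p).primeCompl) b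
  have key : φ (d * u * ↑t) = φ (v * c * ↑s) := by
    rw [map_mul, map_mul, map_mul, map_mul, ← hu, ← hv]
    linear_combination ((algebraMap (MvPolynomial (Fin 2) L) Rl) ↑s *
      (algebraMap (MvPolynomial (Fin 2) L) Rl) ↑t) * h
  have keyA : d * u * ↑t = v * c * ↑s := phi_inj key
  obtain ⟨c₀, c₁, hsplit, hc₁, hc₀ne, hq₀⟩ := split_factor (ptIdeal_isPrime L p) hc
  have hdvd : c₀ ∣ u * (d * ↑t) := by
    have h1 : u * (d * ↑t) = v * c * ↑s := by rw [← keyA]; ring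
    rw [h1, hsplit]
    exact ⟨c₁ * v * ↑s, by ring⟩
  have hc₀u : c₀ ∣ u := by
    refine UniqueFactorizationMonoid.dvd_of_dvd_mul_left_of_no_prime_factors hc₀ne ?_ hdvd
    intro q hq1 hq2 hq3
    obtain ⟨hqm, hqc⟩ := hq₀ q hq3 hq1
    rcases hq3.dvd_or_dvd hq2 with hd' | hd'
    · exact hnc q hq3 hqm hqc hd'
    · obtain ⟨k, hk⟩ := hd'
      exact t.2 (hk ▸ Ideal.mul_mem_right _ _ hqm)
  obtain ⟨k, hk⟩ := hc₀u
  have hsu : IsUnit (φ (s : MvPolynomial (Fin 2) L)) := IsLocalization.map_units Rl s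
  have hc₁mem : c₁ ∈ (ptIdeal L p).primeCompl := hc₁
  have hc₁u : IsUnit (φ c₁) := IsLocalization.map_units Rl ⟨c₁, hc₁mem⟩
  obtain ⟨si, hsi⟩ := hsu.exists_right_inv
  obtain ⟨ci, hci⟩ := hc₁u.exists_right_inv
  refine ⟨φ k * si * ci, ?_⟩
  apply hsu.mul_right_cancel
  rw [hu, hk, hsplit]
  have e1 : si * φ (s : MvPolynomial (Fin 2) L) = 1 := by rw [mul_comm]; exact hsi
  have e2 : ci * φ c₁ = 1 := by rw [mul_comm]; exact hci
  calc φ (c₀ * k) = φ c₀ * φ k := by rw [map_mul]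
    _ = φ k * φ c₀ * (ci * φ c₁) * (si * φ (s : MvPolynomial (Fin 2) L)) := by
        rw [e1, e2]; ring
    _ = φ k * si * ci * (φ c₀ * φ c₁) * φ (s : MvPolynomial (Fin 2) L) := by ring
    _ = φ k * si * ci * φ (c₀ * c₁) * φ (s : MvPolynomial (Fin 2) L) := by rw [map_mul]

/-- The local ring modulo (the image of) a prime vanishing at `p` is
infinite-dimensional over `L`. -/
theorem rank_quotient_prime_infinite {q : MvPolynomial (Fin 2) L} (hq : Prime q)
    (hqm : q ∈ ptIdeal L p) :
    ¬ Module.rank L (Rl ⧸ Ideal.span {φ q}) < Cardinal.aleph0 := by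
  intro hlt
  set J : Ideal Rl := Ideal.span {φ q} with hJdef
  have hmap : J = Ideal.map (φ) (Ideal.span {q}) := by
    rw [Ideal.map_span, Set.image_singleton]
  have hprime : (Ideal.span ({q} : Set (MvPolynomial (Fin 2) L))).IsPrime :=
    (Ideal.span_singleton_prime hq.ne_zero).mpr hq
  have hdisj : Disjoint ((ptIdeal L p).primeCompl : Set (MvPolynomial (Fin 2) L))
      ((Ideal.span {q} : Ideal (MvPolynomial (Fin 2) L)) : Set (MvPolynomial (Fin 2) L)) := by
    rw [Set.disjoint_left]
    intro a ha hmem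
    exact ha (Ideal.span_le.mpr (Set.singleton_subset_iff.mpr hqm) hmem)
  have hJprime : J.IsPrime := by
    rw [hmap]
    exact IsLocalization.isPrime_of_isPrime_disjoint (ptIdeal L p).primeCompl Rl _ hprime hdisj
  haveI := hJprime
  haveI : IsDomain (Rl ⧸ J) := (Ideal.Quotient.isDomain_iff_prime J).mpr hJprime
  haveI hfree : Module.Free L (Rl ⧸ J) := Module.Free.of_divisionRing L _
  haveI : Module.Finite L (Rl ⧸ J) := Module.rank_lt_aleph0_iff.mp hlt
  haveI : Algebra.IsIntegral L (Rl ⧸ J) := Algebra.IsIntegral.of_finite L _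
  have hfield : IsField (Rl ⧸ J) := isField_of_isIntegral_of_isField' (R := L) (S := Rl ⧸ J) (Field.toIsField L)
  have hmax : J.IsMaximal := Ideal.Quotient.maximal_of_isField _ hfield
  have hle : J ≤ IsLocalRing.maximalIdeal Rl := IsLocalRing.le_maximalIdeal hJprime.ne_top
  have hJeq : J = IsLocalRing.maximalIdeal Rl :=
    hmax.eq_of_le (IsLocalRing.maximalIdeal.isMaximal Rl).ne_top hle
  have key : ∀ e : MvPolynomial (Fin 2) L, e ∈ ptIdeal L p → q ∣ e := by
    intro e he
    have h1 : φ e ∈ J := by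
      rw [hJeq, ← Localization.AtPrime.map_eq_maximalIdeal]
      exact Ideal.mem_map_of_mem _ he
    obtain ⟨r, hr⟩ := Ideal.mem_span_singleton'.mp h1
    obtain ⟨⟨a, s⟩, ha⟩ := IsLocalization.surj (M := (ptIdeal L p).primeCompl) r
    have h2 : φ (a * q) = φ (e * ↑s) := by
      rw [map_mul, map_mul, ← ha, ← hr]
      ring
    have heq := phi_inj h2
    have hdv : q ∣ e * ↑s := ⟨a, by rw [← heq]; ring⟩
    rcases hq.dvd_or_dvd hdv with h | h
    · exact h
    · obtain ⟨k, hk⟩ := h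
      exact absurd (hk ▸ Ideal.mul_mem_right _ _ hqm) s.2
  exact no_common_prime_factor hq (key _ X0_sub_mem) (key _ X1_sub_mem)

theorem rank_le_of_ideal_le {I J : Ideal Rl} (h : I ≤ J) :
    Module.rank L (Rl ⧸ J) ≤ Module.rank L (Rl ⧸ I) := by
  refine LinearMap.rank_le_of_surjective ((Submodule.mapQ I J LinearMap.id h).restrictScalars L) ?_
  intro x
  obtain ⟨r, rfl⟩ := Submodule.Quotient.mk_surjective J x
  exact ⟨Submodule.Quotient.mk r, rfl⟩

end InterMultAux

set_option maxHeartbeats 2000000 in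
set_option synthInstance.maxHeartbeats 1000000 in
open InterMultAux in
/-- Additivity of intersection multiplicity over products (used in Lemma 4.16): if `p` is
a common zero of `f₁·f₂` and `g` and `I(f₁·f₂, g, p)` is finite, then
`I(f₁·f₂, g, p) = I(f₁, g, p) + I(f₂, g, p)`. -/
theorem interMult_mul_left (L : Type) [Field L] [IsAlgClosed L]
    (f₁ f₂ g : MvPolynomial (Fin 2) L) (p : L × L)
    (hf : eval ![p.1, p.2] (f₁ * f₂) = 0) (hg : eval ![p.1, p.2] g = 0)
    (hfin : interMult L (f₁ * f₂) g p < Cardinal.aleph0) :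
    interMult L (f₁ * f₂) g p = interMult L f₁ g p + interMult L f₂ g p := by
  classical
  set Rl := Localization.AtPrime (ptIdeal L p) with hRl
  set φ := algebraMap (MvPolynomial (Fin 2) L) Rl with hφ
  have hIM : ∀ f' g' : MvPolynomial (Fin 2) L, interMult L f' g' p =
      Module.rank L (Rl ⧸ (Ideal.span {φ f', φ g'})) := fun _ _ => rfl
  rw [hIM] at hfin
  rw [hIM, hIM, hIM]
  have hFm : f₁ * f₂ ∈ ptIdeal L p := mem_ptIdeal.mpr hf
  have hgm : g ∈ ptIdeal L p := mem_ptIdeal.mpr hg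
  set I : Ideal Rl := Ideal.span {φ (f₁ * f₂), φ g} with hI
  set I₁ : Ideal Rl := Ideal.span {φ f₁, φ g} with hI₁
  set I₂ : Ideal Rl := Ideal.span {φ f₂, φ g} with hI₂
  -- consequences of finiteness
  have hcontra : ∀ q : MvPolynomial (Fin 2) L, Prime q → q ∈ ptIdeal L p →
      I ≤ Ideal.span {φ q} → False := by
    intro q hq hqm hle
    exact rank_quotient_prime_infinite hq hqm (lt_of_le_of_lt (rank_le_of_ideal_le hle) hfin)
  have hF0 : f₁ * f₂ ≠ 0 := by
    intro h0
    rcases eq_or_ne g 0 with hg0 | hg0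
    · refine hcontra _ (prime_X0_sub p.1) X0_sub_mem (Ideal.span_le.mpr ?_)
      rw [h0, hg0]
      simp
    · obtain ⟨q, hq, hqm2, hqd⟩ := exists_prime_factor hg0 hgm
      refine hcontra q hq hqm2 (Ideal.span_le.mpr ?_)
      rw [h0]
      rw [Set.insert_subset_iff]
      refine ⟨by simp, Set.singleton_subset_iff.mpr ?_⟩
      exact Ideal.mem_span_singleton.mpr (map_dvd φ hqd)
  have hg0 : g ≠ 0 := by
    intro h0
    obtain ⟨q, hq, hqm2, hqd⟩ := exists_prime_factor hF0 hFm
    refine hcontra q hq hqm2 (Ideal.span_le.mpr ?_)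
    rw [h0]
    rw [Set.insert_subset_iff]
    refine ⟨Ideal.mem_span_singleton.mpr (map_dvd φ hqd), by simp⟩
  have hnc : ∀ q : MvPolynomial (Fin 2) L, Prime q → q ∈ ptIdeal L p →
      q ∣ f₁ * f₂ → q ∣ g → False := by
    intro q hq hqm h1 h2
    refine hcontra q hq hqm (Ideal.span_le.mpr ?_)
    rw [Set.insert_subset_iff]
    exact ⟨Ideal.mem_span_singleton.mpr (map_dvd φ h1),
      Set.singleton_subset_iff.mpr (Ideal.mem_span_singleton.mpr (map_dvd φ h2))⟩
  -- the exact sequence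
  have hII₂ : I ≤ I₂ := by
    refine Ideal.span_le.mpr ?_
    rw [Set.insert_subset_iff]
    constructor
    · rw [map_mul]
      exact Ideal.mul_mem_left _ _ (Ideal.subset_span (Set.mem_insert _ _))
    · exact Set.singleton_subset_iff.mpr
        (Ideal.subset_span (Set.mem_insert_of_mem _ (Set.mem_singleton _)))
  set π := (Submodule.mapQ I I₂ LinearMap.id hII₂).restrictScalars L with hπ
  have hπs : Function.Surjective π := by
    intro x
    obtain ⟨r, rfl⟩ := Submodule.Quotient.mk_surjective I₂ x
    exact ⟨Submodule.Quotient.mk r, rfl⟩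
  have hker : I₁ ≤ LinearMap.ker ((I.mkQ).comp (LinearMap.lsmul Rl Rl (φ f₂))) := by
    refine Ideal.span_le.mpr ?_
    rw [Set.insert_subset_iff]
    constructor
    · rw [SetLike.mem_coe, LinearMap.mem_ker]
      show Submodule.Quotient.mk (φ f₂ • φ f₁) = (0 : Rl ⧸ I)
      rw [Submodule.Quotient.mk_eq_zero]
      have : φ f₂ • φ f₁ = φ (f₁ * f₂) := by
        rw [smul_eq_mul, map_mul]; ring
      rw [this]
      exact Ideal.subset_span (Set.mem_insert _ _)
    · rw [Set.singleton_subset_iff, SetLike.mem_coe, LinearMap.mem_ker]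
      show Submodule.Quotient.mk (φ f₂ • φ g) = (0 : Rl ⧸ I)
      rw [Submodule.Quotient.mk_eq_zero, smul_eq_mul]
      exact Ideal.mul_mem_left _ _
        (Ideal.subset_span (Set.mem_insert_of_mem _ (Set.mem_singleton _)))
  set μ := (Submodule.liftQ I₁ ((I.mkQ).comp (LinearMap.lsmul Rl Rl (φ f₂))) hker).restrictScalars L
    with hμ
  have hμ_apply : ∀ z : Rl, μ (Submodule.Quotient.mk z) = Submodule.Quotient.mk (φ f₂ * z) :=
    fun z => rfl
  have hμinj : Function.Injective μ := by
    rw [injective_iff_map_eq_zero]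
    intro x hx
    obtain ⟨z, rfl⟩ := Submodule.Quotient.mk_surjective I₁ x
    rw [hμ_apply, Submodule.Quotient.mk_eq_zero] at hx
    obtain ⟨a, b, hab⟩ := Ideal.mem_span_pair.mp hx
    rw [map_mul] at hab
    have hw : φ f₂ * (z - a * φ f₁) = b * φ g := by linear_combination -hab
    obtain ⟨r, hr⟩ := loc_dvd_transfer hg0
      (fun q hq hqm hqg hqf₂ => hnc q hq hqm (hqf₂.mul_left f₁) hqg)
      (z - a * φ f₁) b hw
    have hzmem : z ∈ I₁ := Ideal.mem_span_pair.mpr ⟨a, r, by linear_combination -hr⟩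
    rw [Submodule.Quotient.mk_eq_zero]
    exact hzmem
  have hrange : LinearMap.range μ = LinearMap.ker π := by
    ext x
    constructor
    · rintro ⟨y, rfl⟩
      obtain ⟨z, rfl⟩ := Submodule.Quotient.mk_surjective I₁ y
      rw [LinearMap.mem_ker, hμ_apply]
      show Submodule.Quotient.mk (LinearMap.id (φ f₂ * z)) = (0 : Rl ⧸ I₂)
      rw [Submodule.Quotient.mk_eq_zero]
      exact Ideal.mul_mem_right _ _ (Ideal.subset_span (Set.mem_insert _ _))
    · intro hx
      obtain ⟨z, rfl⟩ := Submodule.Quotient.mk_surjective I x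
      rw [LinearMap.mem_ker] at hx
      have hz : z ∈ I₂ := by
        have : Submodule.Quotient.mk (LinearMap.id z) = (0 : Rl ⧸ I₂) := hx
        rwa [Submodule.Quotient.mk_eq_zero] at this
      obtain ⟨a, b, hab⟩ := Ideal.mem_span_pair.mp hz
      refine ⟨Submodule.Quotient.mk a, ?_⟩
      rw [hμ_apply]
      rw [Submodule.Quotient.eq]
      have : φ f₂ * a - z = (-b) * φ g := by linear_combination hab
      rw [this]
      exact Ideal.mul_mem_left _ _
        (Ideal.subset_span (Set.mem_insert_of_mem _ (Set.mem_singleton _)))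
  have h1 := LinearMap.rank_range_add_rank_ker π
  have h2 : Module.rank L (LinearMap.range π) = Module.rank L (Rl ⧸ I₂) := by
    rw [LinearMap.range_eq_top.mpr hπs]
    exact rank_top L _
  have h3 : Module.rank L (LinearMap.ker π) = Module.rank L (Rl ⧸ I₁) := by
    rw [← hrange]
    exact ((LinearEquiv.ofInjective μ hμinj).rank_eq).symm
  rw [← h1, h2, h3, add_comm]
end
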